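/- arXiv:1406.6474 — 4 statements merged into one kernel-verified Lean document; each statement's English description precedes it below -/
import Mathlib

section
/- Let P and Q be nonempty closed convex subsets of ℝ^D, and suppose κ* = sup_{x ∈ (P ∪ Q')∖E} κ(x) < ∞. Then alternating projections between P and Q converges linearly with rate 1 − 1/κ*²: the sequences p_k and q_k converge to points p* ∈ E and q* ∈ H respectively, and ‖p_k − p*‖ ≤ 2‖p_0 − p*‖(1 − κ*⁻²)^k and ‖q_k − q*‖ ≤ 2‖q_0 − q*‖(1 − κ*⁻²)^k for all k. -/
open scoped RealInnerProductSpace Pointwise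
open Metric Filter

noncomputable section

/-- Distance between two sets. -/
def sDist {X : Type*} [MetricSpace X] (K₁ K₂ : Set X) : ℝ :=
  sInf (Set.image2 dist K₁ K₂)

/-- `y` is the nearest-point projection of `x` onto `C`. -/
def IsProjOn {X : Type*} [MetricSpace X] (C : Set X) (x y : X) : Prop :=
  y ∈ C ∧ ∀ z ∈ C, dist x y ≤ dist x z

section Aux

variable {F : Type*} [NormedAddCommGroup F] [InnerProductSpace ℝ F]

lemma le_infDist' {s : Set F} (hs : s.Nonempty) {x : F} {b : ℝ}
    (h : ∀ y ∈ s, b ≤ dist x y) : b ≤ infDist x s := by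
  by_contra hlt
  push_neg at hlt
  obtain ⟨y, hy, hd⟩ := (infDist_lt_iff hs).1 hlt
  exact absurd (h y hy) (not_le.2 hd)

lemma isProjOn_inner_le {C : Set F} (hC : Convex ℝ C) {x y : F}
    (h : IsProjOn C x y) : ∀ z ∈ C, ⟪x - y, z - y⟫ ≤ 0 := by
  have heq : ‖x - y‖ = ⨅ w : C, ‖x - w‖ := by
    haveI : Nonempty C := ⟨⟨y, h.1⟩⟩
    apply le_antisymm
    · exact le_ciInf fun z => by simpa [dist_eq_norm] using h.2 z z.2
    · have hbd : BddBelow (Set.range fun w : C => ‖x - w‖) := by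
        refine ⟨0, ?_⟩
        rintro _ ⟨w, rfl⟩
        exact norm_nonneg _
      exact ciInf_le hbd ⟨y, h.1⟩
  exact (norm_eq_iInf_iff_real_inner_le_zero hC h.1).1 heq

lemma isProjOn_firm {C : Set F} (hC : Convex ℝ C) {x₁ y₁ x₂ y₂ : F}
    (h1 : IsProjOn C x₁ y₁) (h2 : IsProjOn C x₂ y₂) :
    ‖y₁ - y₂‖ ^ 2 + ‖(x₁ - x₂) - (y₁ - y₂)‖ ^ 2 ≤ ‖x₁ - x₂‖ ^ 2 := by
  have A := isProjOn_inner_le hC h1 y₂ h2.1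
  have B := isProjOn_inner_le hC h2 y₁ h1.1
  have expand : ‖x₁ - x₂‖ ^ 2
      = ‖y₁ - y₂‖ ^ 2 + 2 * ⟪y₁ - y₂, (x₁ - x₂) - (y₁ - y₂)⟫
        + ‖(x₁ - x₂) - (y₁ - y₂)‖ ^ 2 := by
    have h := norm_add_sq_real (y₁ - y₂) ((x₁ - x₂) - (y₁ - y₂))
    have e : (y₁ - y₂) + ((x₁ - x₂) - (y₁ - y₂)) = x₁ - x₂ := by abel
    rw [e] at h
    linarith
  have h3 : 0 ≤ ⟪y₁ - y₂, (x₁ - x₂) - (y₁ - y₂)⟫ := by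
    have e1 : (x₁ - x₂) - (y₁ - y₂) = (x₁ - y₁) - (x₂ - y₂) := by abel
    rw [e1, inner_sub_right]
    have eA : ⟪y₁ - y₂, x₁ - y₁⟫ = -⟪x₁ - y₁, y₂ - y₁⟫ := by
      rw [real_inner_comm, ← inner_neg_right]
      congr 1
      abel
    have eB : ⟪y₁ - y₂, x₂ - y₂⟫ = ⟪x₂ - y₂, y₁ - y₂⟫ := real_inner_comm _ _
    rw [eA, eB]
    linarith
  linarith

end Aux

set_option maxHeartbeats 1000000 in
theorem stmt0 {D : ℕ} (P Q : Set (EuclideanSpace ℝ (Fin D)))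
    (hPne : P.Nonempty) (hQne : Q.Nonempty)
    (hPc : IsClosed P) (hQc : IsClosed Q)
    (hPconv : Convex ℝ P) (hQconv : Convex ℝ Q)
    (v : EuclideanSpace ℝ (Fin D)) (hv : IsProjOn (closure (Q - P)) 0 v)
    (E H' Q' : Set (EuclideanSpace ℝ (Fin D)))
    (hE : E = {p ∈ P | infDist p Q = sDist P Q})
    (hH : H' = {q ∈ Q | infDist q P = sDist Q P})
    (hQ' : Q' = (fun q => q - v) '' Q)
    (hEne : E.Nonempty)
    (κ : EuclideanSpace ℝ (Fin D) → ℝ)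
    (hκ : ∀ x, κ x = infDist x E / max (infDist x P) (infDist x Q'))
    (hfin : BddAbove (κ '' ((P ∪ Q') \ E)))
    (κstar : ℝ) (hκstar : κstar = sSup (κ '' ((P ∪ Q') \ E)))
    (p q : ℕ → EuclideanSpace ℝ (Fin D))
    (hp0 : p 0 ∈ P)
    (hq : ∀ k, IsProjOn Q (p k) (q k))
    (hp : ∀ k, IsProjOn P (q k) (p (k + 1))) :
    ∃ pstar ∈ E, ∃ qstar ∈ H',
      Tendsto p atTop (nhds pstar) ∧ Tendsto q atTop (nhds qstar) ∧
      ∀ k, ‖p k - pstar‖ ≤ 2 * ‖p 0 - pstar‖ * (1 - (κstar ^ 2)⁻¹) ^ k ∧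
        ‖q k - qstar‖ ≤ 2 * ‖q 0 - qstar‖ * (1 - (κstar ^ 2)⁻¹) ^ k := by
  -- membership in Q'
  have hQ'mem : ∀ {x : EuclideanSpace ℝ (Fin D)}, x ∈ Q' ↔ x + v ∈ Q := by
    intro x
    rw [hQ']
    constructor
    · rintro ⟨w, hw, rfl⟩
      simpa using hw
    · intro h
      exact ⟨x + v, h, by simp⟩
  have hQ'ne : Q'.Nonempty := by
    obtain ⟨w, hw⟩ := hQne
    exact ⟨w - v, hQ'.symm ▸ ⟨w, hw, rfl⟩⟩
  have hQ'c : IsClosed Q' := by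
    have : Q' = (fun x => x + v) ⁻¹' Q := Set.ext fun x => hQ'mem
    rw [this]
    exact hQc.preimage (continuous_id.add continuous_const)
  -- variational inequality for v
  have hclconv : Convex ℝ (closure (Q - P)) := (hQconv.sub hPconv).closure
  have hvineq : ∀ w ∈ closure (Q - P), ‖v‖ ^ 2 ≤ ⟪v, w⟫ := by
    intro w hw
    have h := isProjOn_inner_le hclconv hv w hw
    rw [zero_sub, inner_neg_left, inner_sub_right, real_inner_self_eq_norm_sq] at h
    linarith
  have hin : ∀ x ∈ P, ∀ y ∈ Q, ‖v‖ ^ 2 ≤ ⟪v, y - x⟫ := fun x hx y hy =>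
    hvineq _ (subset_closure (Set.sub_mem_sub hy hx))
  have hnormle : ∀ x ∈ P, ∀ y ∈ Q, ‖v‖ ≤ ‖y - x‖ := by
    intro x hx y hy
    have h1 := hin x hx y hy
    have h2 : ⟪v, y - x⟫ ≤ ‖v‖ * ‖y - x‖ := real_inner_le_norm v (y - x)
    rcases eq_or_lt_of_le (norm_nonneg v) with h | h
    · rw [← h]; exact norm_nonneg _
    · nlinarith
  have huniq : ∀ x ∈ P, ∀ y ∈ Q, ‖y - x‖ ≤ ‖v‖ → y - x = v := by
    intro x hx y hy hle
    have h1 := hin x hx y hy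
    have hsq : ‖(y - x) - v‖ ^ 2 ≤ 0 := by
      rw [norm_sub_sq_real, real_inner_comm]
      nlinarith [norm_nonneg (y - x), norm_nonneg v]
    have h0 : ‖(y - x) - v‖ = 0 :=
      le_antisymm (by nlinarith [norm_nonneg ((y - x) - v)]) (norm_nonneg _)
    have := norm_eq_zero.1 h0
    exact sub_eq_zero.1 this
  -- set distances
  have hsPQ : sDist P Q = ‖v‖ := by
    unfold sDist
    apply le_antisymm
    · apply le_of_forall_pos_le_add
      intro ε hε
      obtain ⟨w, hw, hwd⟩ := Metric.mem_closure_iff.1 hv.1 ε hε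
      obtain ⟨y, hy, x, hx, rfl⟩ := hw
      have hmem : dist x y ∈ Set.image2 dist P Q := Set.mem_image2_of_mem hx hy
      have : sInf (Set.image2 dist P Q) ≤ dist x y :=
        csInf_le ⟨0, fun _ ⟨_, _, _, _, h⟩ => h ▸ dist_nonneg⟩ hmem
      have hd : dist x y ≤ ‖v‖ + ε := by
        have : dist x y = ‖y - x‖ := by rw [dist_eq_norm, norm_sub_rev]
        rw [this]
        have h1 : ‖y - x‖ ≤ ‖v‖ + ‖(y - x) - v‖ := by
          have := norm_sub_norm_le (y - x) v
          have h2 := norm_sub_rev (y - x) v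
          linarith [abs_norm_sub_norm_le (y - x) v, le_abs_self (‖y - x‖ - ‖v‖)]
        have h3 : ‖(y - x) - v‖ = dist v (y - x) := by
          rw [dist_eq_norm, norm_sub_rev]
        linarith
      linarith
    · apply le_csInf ((hPne.image2 hQne))
      rintro b ⟨x, hx, y, hy, rfl⟩
      have : dist x y = ‖y - x‖ := by rw [dist_eq_norm, norm_sub_rev]
      rw [this]
      exact hnormle x hx y hy
  have hsQP : sDist Q P = ‖v‖ := by
    have : Set.image2 dist Q P = Set.image2 dist P Q := by
      ext b
      constructor
      · rintro ⟨y, hy, x, hx, rfl⟩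
        exact ⟨x, hx, y, hy, dist_comm x y⟩
      · rintro ⟨x, hx, y, hy, rfl⟩
        exact ⟨y, hy, x, hx, dist_comm y x⟩
    unfold sDist
    rw [this]
    exact hsPQ
  -- characterization of E
  have hEmem : ∀ {x : EuclideanSpace ℝ (Fin D)}, x ∈ E ↔ x ∈ P ∧ x + v ∈ Q := by
    intro x
    rw [hE]
    simp only [Set.mem_setOf_eq, hsPQ]
    constructor
    · rintro ⟨hxP, hxd⟩
      obtain ⟨y, hyQ, hyd⟩ := hQc.exists_infDist_eq_dist hQne x
      have hxy : ‖y - x‖ ≤ ‖v‖ := by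
        rw [← norm_sub_rev, ← dist_eq_norm]
        rw [hyd] at hxd
        exact hxd.le
      have := huniq x hxP y hyQ hxy
      refine ⟨hxP, ?_⟩
      rw [show x + v = y by rw [← this]; abel]
      exact hyQ
    · rintro ⟨hxP, hxvQ⟩
      refine ⟨hxP, le_antisymm ?_ ?_⟩
      · have h1 : infDist x Q ≤ dist x (x + v) := infDist_le_dist_of_mem hxvQ
        have h2 : dist x (x + v) = ‖v‖ := by
          rw [dist_eq_norm]
          simp [norm_sub_rev]
        linarith
      · apply le_infDist' hQne
        intro y hy
        rw [dist_eq_norm, norm_sub_rev]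
        exact hnormle x hxP y hy
  have hEeq : E = P ∩ Q' := Set.ext fun x => by
    rw [hEmem, Set.mem_inter_iff, hQ'mem]
  have hEP : E ⊆ P := hEeq ▸ Set.inter_subset_left
  have hEQ' : E ⊆ Q' := hEeq ▸ Set.inter_subset_right
  have hEc : IsClosed E := hEeq ▸ hPc.inter hQ'c
  -- characterization of H'
  have hHmem : ∀ {x : EuclideanSpace ℝ (Fin D)}, x ∈ H' ↔ x - v ∈ E := by
    intro x
    rw [hH]
    simp only [Set.mem_setOf_eq, hsQP, hEmem, sub_add_cancel]
    constructor
    · rintro ⟨hxQ, hxd⟩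
      obtain ⟨y, hyP, hyd⟩ := hPc.exists_infDist_eq_dist hPne x
      have hxy : ‖x - y‖ ≤ ‖v‖ := by
        rw [← dist_eq_norm]
        rw [hyd] at hxd
        exact hxd.le
      have := huniq y hyP x hxQ hxy
      have hy : x - v = y := by rw [← this]; abel
      exact ⟨hy ▸ hyP, hxQ⟩
    · rintro ⟨hxvP, hxQ⟩
      refine ⟨hxQ, le_antisymm ?_ ?_⟩
      · have h1 : infDist x P ≤ dist x (x - v) := infDist_le_dist_of_mem hxvP
        have h2 : dist x (x - v) = ‖v‖ := by
          rw [dist_eq_norm]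
          simp
        linarith
      · apply le_infDist' hPne
        intro y hy
        rw [dist_eq_norm]
        exact hnormle y hy x hxQ
  have hHne : H'.Nonempty := by
    obtain ⟨e, he⟩ := hEne
    exact ⟨e + v, hHmem.2 (by simpa using he)⟩
  have hHc : IsClosed H' := by
    have : H' = (fun x => x - v) ⁻¹' E := Set.ext fun x => hHmem
    rw [this]
    exact hEc.preimage (continuous_id.sub continuous_const)
  -- infDist to H' via shift
  have hdistH : ∀ x : EuclideanSpace ℝ (Fin D), infDist x H' = infDist (x - v) E := by
    intro x
    apply le_antisymm
    · apply le_infDist' hEne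
      intro y hy
      have hmem : y + v ∈ H' := hHmem.2 (by simpa using hy)
      have := infDist_le_dist_of_mem (x := x) hmem
      have he : dist x (y + v) = dist (x - v) y := by
        rw [dist_eq_norm, dist_eq_norm]
        congr 1
        abel
      linarith [he ▸ this]
    · apply le_infDist' hHne
      intro z hz
      have hmem : z - v ∈ E := hHmem.1 hz
      have := infDist_le_dist_of_mem (x := x - v) hmem
      have he : dist (x - v) (z - v) = dist x z := by
        rw [dist_eq_norm, dist_eq_norm]
        congr 1
        abel
      linarith [he ▸ this]
  -- projections of points of E
  have hprojQ : ∀ z ∈ E, IsProjOn Q z (z + v) := by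
    intro z hz
    refine ⟨(hEmem.1 hz).2, fun w hw => ?_⟩
    have h1 : dist z (z + v) = ‖v‖ := by rw [dist_eq_norm]; simp [norm_sub_rev]
    have h2 : dist z w = ‖w - z‖ := by rw [dist_eq_norm, norm_sub_rev]
    rw [h1, h2]
    exact hnormle z (hEmem.1 hz).1 w hw
  have hprojP : ∀ z ∈ E, IsProjOn P (z + v) z := by
    intro z hz
    refine ⟨(hEmem.1 hz).1, fun w hw => ?_⟩
    have h1 : dist (z + v) z = ‖v‖ := by rw [dist_eq_norm]; simp
    have h2 : dist (z + v) w = ‖(z + v) - w‖ := dist_eq_norm _ _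
    rw [h1, h2]
    exact hnormle w hw (z + v) (hEmem.1 hz).2
  have hpP : ∀ k, p k ∈ P := fun k => by
    cases k with
    | zero => exact hp0
    | succ n => exact (hp n).1
  have hqQ : ∀ k, q k ∈ Q := fun k => (hq k).1
  -- Fejér half-steps
  have fejQhalf : ∀ z ∈ E, ∀ k, ‖q k - (z + v)‖ ≤ ‖p k - z‖ := by
    intro z hz k
    have firm := isProjOn_firm hQconv (hq k) (hprojQ z hz)
    nlinarith [norm_nonneg (q k - (z + v)), norm_nonneg (p k - z),
      norm_nonneg ((p k - z) - (q k - (z + v)))]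
  have fejPhalf : ∀ z ∈ E, ∀ k, ‖p (k + 1) - z‖ ≤ ‖q k - (z + v)‖ := by
    intro z hz k
    have firm := isProjOn_firm hPconv (hp k) (hprojP z hz)
    nlinarith [norm_nonneg (p (k + 1) - z), norm_nonneg (q k - (z + v)),
      norm_nonneg ((q k - (z + v)) - (p (k + 1) - z))]
  have fejP : ∀ z ∈ E, ∀ k, dist (p (k + 1)) z ≤ dist (p k) z := by
    intro z hz k
    rw [dist_eq_norm, dist_eq_norm]
    exact le_trans (fejPhalf z hz k) (fejQhalf z hz k)
  have fejQ : ∀ w ∈ H', ∀ k, dist (q (k + 1)) w ≤ dist (q k) w := by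
    intro w hw k
    have hz : w - v ∈ E := hHmem.1 hw
    have hwv : w - v + v = w := by abel
    rw [dist_eq_norm, dist_eq_norm]
    calc ‖q (k + 1) - w‖ = ‖q (k + 1) - (w - v + v)‖ := by rw [hwv]
      _ ≤ ‖p (k + 1) - (w - v)‖ := fejQhalf (w - v) hz (k + 1)
      _ ≤ ‖q k - (w - v + v)‖ := fejPhalf (w - v) hz k
      _ = ‖q k - w‖ := by rw [hwv]
  have fejP' : ∀ z ∈ E, ∀ k m, k ≤ m → dist (p m) z ≤ dist (p k) z := by
    intro z hz k m hkm
    induction m, hkm using Nat.le_induction with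
    | base => exact le_refl _
    | succ n hn ih => exact le_trans (fejP z hz n) ih
  have fejQ' : ∀ w ∈ H', ∀ k m, k ≤ m → dist (q m) w ≤ dist (q k) w := by
    intro w hw k m hkm
    induction m, hkm using Nat.le_induction with
    | base => exact le_refl _
    | succ n hn ih => exact le_trans (fejQ w hw n) ih
  by_cases hS : ((P ∪ Q') \ E).Nonempty
  · -- main case
    have hκub : ∀ x ∈ (P ∪ Q') \ E, κ x ≤ κstar := fun x hx =>
      hκstar ▸ le_csSup hfin (Set.mem_image_of_mem κ hx)
    have hposnm : ∀ (x : EuclideanSpace ℝ (Fin D)) (s : Set (EuclideanSpace ℝ (Fin D))),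
        IsClosed s → s.Nonempty → x ∉ s → 0 < infDist x s := by
      intro x s hc hn hx
      rcases lt_or_eq_of_le (infDist_nonneg (x := x) (s := s)) with h | h
      · exact h
      · exact absurd ((hc.mem_iff_infDist_zero hn).2 h.symm) hx
    have hκ1 : 1 ≤ κstar := by
      obtain ⟨x₀, hx₀m, hx₀E⟩ := hS
      have h1 : 1 ≤ κ x₀ := by
        rw [hκ]
        rcases hx₀m with hxP | hxQ'
        · have hd0 : infDist x₀ P = 0 := infDist_zero_of_mem hxP
          have hpos : 0 < infDist x₀ Q' :=
            hposnm x₀ Q' hQ'c hQ'ne (fun h => hx₀E (hEeq ▸ ⟨hxP, h⟩))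
          have hle : infDist x₀ Q' ≤ infDist x₀ E := infDist_le_infDist_of_subset hEQ' hEne
          rw [hd0, max_eq_right (infDist_nonneg), le_div_iff₀ hpos]
          linarith
        · have hd0 : infDist x₀ Q' = 0 := infDist_zero_of_mem hxQ'
          have hpos : 0 < infDist x₀ P :=
            hposnm x₀ P hPc hPne (fun h => hx₀E (hEeq ▸ ⟨h, hxQ'⟩))
          have hle : infDist x₀ P ≤ infDist x₀ E := infDist_le_infDist_of_subset hEP hEne
          rw [hd0, max_eq_left (infDist_nonneg), le_div_iff₀ hpos]
          linarith
      linarith [hκub x₀ ⟨hx₀m, hx₀E⟩]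
    have hκpos : 0 < κstar := by linarith
    have hκ2 : 1 ≤ κstar ^ 2 := by nlinarith
    have hκ2pos : 0 < κstar ^ 2 := by linarith
    have hθ0 : 0 ≤ 1 - (κstar ^ 2)⁻¹ := by
      have := inv_le_one_of_one_le₀ hκ2
      linarith
    have hθ1 : 1 - (κstar ^ 2)⁻¹ < 1 := by
      have : 0 < (κstar ^ 2)⁻¹ := inv_pos.2 hκ2pos
      linarith
    set θ : ℝ := 1 - (κstar ^ 2)⁻¹ with hθdef
    -- step A
    have stepA : ∀ k, infDist (q k) H' ^ 2 ≤ θ * infDist (p k) E ^ 2 := by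
      intro k
      obtain ⟨z, hzE, hzd⟩ := hEc.exists_infDist_eq_dist hEne (p k)
      have firm := isProjOn_firm hQconv (hq k) (hprojQ z hzE)
      have hrw : (p k - z) - (q k - (z + v)) = p k - (q k - v) := by abel
      rw [hrw] at firm
      have hh : infDist (q k) H' ≤ ‖q k - (z + v)‖ := by
        rw [← dist_eq_norm]
        exact infDist_le_dist_of_mem (hHmem.2 (by simpa using hzE))
      have hpz : ‖p k - z‖ = infDist (p k) E := by rw [← dist_eq_norm, ← hzd]
      rw [hpz] at firm
      have hsqh : infDist (q k) H' ^ 2 ≤ ‖q k - (z + v)‖ ^ 2 :=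
        pow_le_pow_left₀ infDist_nonneg hh 2
      have ht2 : 0 ≤ ‖p k - (q k - v)‖ ^ 2 := sq_nonneg _
      by_cases hpkE : p k ∈ E
      · have h0 : infDist (p k) E = 0 := infDist_zero_of_mem hpkE
        rw [h0] at firm ⊢
        rw [hθdef]
        nlinarith
      · have hκx := hκub (p k) ⟨Or.inl (hpP k), hpkE⟩
        rw [hκ] at hκx
        have hdP : infDist (p k) P = 0 := infDist_zero_of_mem (hpP k)
        have hpos : 0 < infDist (p k) Q' :=
          hposnm _ Q' hQ'c hQ'ne (fun h => hpkE (hEeq ▸ ⟨hpP k, h⟩))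
        rw [hdP, max_eq_right (infDist_nonneg), div_le_iff₀ hpos] at hκx
        have hQ'le : infDist (p k) Q' ≤ ‖p k - (q k - v)‖ := by
          rw [← dist_eq_norm]
          exact infDist_le_dist_of_mem (hQ'mem.2 (by simpa using hqQ k))
        have h1 : infDist (p k) E ≤ κstar * ‖p k - (q k - v)‖ :=
          le_trans hκx (mul_le_mul_of_nonneg_left hQ'le hκpos.le)
        have key : (κstar ^ 2)⁻¹ * infDist (p k) E ^ 2 ≤ ‖p k - (q k - v)‖ ^ 2 := by
          rw [inv_mul_le_iff₀ hκ2pos]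
          calc infDist (p k) E ^ 2 ≤ (κstar * ‖p k - (q k - v)‖) ^ 2 :=
                pow_le_pow_left₀ infDist_nonneg h1 2
            _ = κstar ^ 2 * ‖p k - (q k - v)‖ ^ 2 := by ring
        rw [hθdef]
        nlinarith
    -- step B
    have stepB : ∀ k, infDist (p (k + 1)) E ^ 2 ≤ θ * infDist (q k) H' ^ 2 := by
      intro k
      obtain ⟨w, hwH, hwd⟩ := hHc.exists_infDist_eq_dist hHne (q k)
      have hwE : w - v ∈ E := hHmem.1 hwH
      have hwv : w - v + v = w := by abel
      have firm := isProjOn_firm hPconv (hp k) (hprojP (w - v) hwE)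
      rw [hwv] at firm
      have hrw : (q k - w) - (p (k + 1) - (w - v)) = (q k - v) - p (k + 1) := by abel
      rw [hrw] at firm
      have hd1 : infDist (p (k + 1)) E ≤ ‖p (k + 1) - (w - v)‖ := by
        rw [← dist_eq_norm]
        exact infDist_le_dist_of_mem hwE
      have hqw : ‖q k - w‖ = infDist (q k) H' := by rw [← dist_eq_norm, ← hwd]
      have hxQ' : q k - v ∈ Q' := hQ'mem.2 (by simpa using hqQ k)
      have hxE : infDist (q k - v) E = infDist (q k) H' := (hdistH (q k)).symm
      rw [hqw] at firm
      have hsqd : infDist (p (k + 1)) E ^ 2 ≤ ‖p (k + 1) - (w - v)‖ ^ 2 :=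
        pow_le_pow_left₀ infDist_nonneg hd1 2
      have ht2 : 0 ≤ ‖(q k - v) - p (k + 1)‖ ^ 2 := sq_nonneg _
      by_cases hxEmem : q k - v ∈ E
      · have h0 : infDist (q k) H' = 0 := by
          rw [← hxE]
          exact infDist_zero_of_mem hxEmem
        rw [h0] at firm ⊢
        rw [hθdef]
        nlinarith
      · have hκx := hκub (q k - v) ⟨Or.inr hxQ', hxEmem⟩
        rw [hκ] at hκx
        have hdQ' : infDist (q k - v) Q' = 0 := infDist_zero_of_mem hxQ'
        have hpos : 0 < infDist (q k - v) P :=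
          hposnm _ P hPc hPne (fun h => hxEmem (hEeq ▸ ⟨h, hxQ'⟩))
        rw [hdQ', max_eq_left (infDist_nonneg), div_le_iff₀ hpos] at hκx
        have hPle : infDist (q k - v) P ≤ ‖(q k - v) - p (k + 1)‖ := by
          rw [← dist_eq_norm]
          exact infDist_le_dist_of_mem (hp k).1
        have h1 : infDist (q k - v) E ≤ κstar * ‖(q k - v) - p (k + 1)‖ :=
          le_trans hκx (mul_le_mul_of_nonneg_left hPle hκpos.le)
        have key : (κstar ^ 2)⁻¹ * infDist (q k) H' ^ 2 ≤ ‖(q k - v) - p (k + 1)‖ ^ 2 := by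
          rw [inv_mul_le_iff₀ hκ2pos, ← hxE]
          calc infDist (q k - v) E ^ 2 ≤ (κstar * ‖(q k - v) - p (k + 1)‖) ^ 2 :=
                pow_le_pow_left₀ infDist_nonneg h1 2
            _ = κstar ^ 2 * ‖(q k - v) - p (k + 1)‖ ^ 2 := by ring
        rw [hθdef]
        nlinarith
    -- one-step decay
    have decP : ∀ k, infDist (p (k + 1)) E ≤ θ * infDist (p k) E := by
      intro k
      have A := stepA k
      have B := stepB k
      have h1 : θ * infDist (q k) H' ^ 2 ≤ θ * (θ * infDist (p k) E ^ 2) :=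
        mul_le_mul_of_nonneg_left A hθ0
      have hsq : infDist (p (k + 1)) E ^ 2 ≤ (θ * infDist (p k) E) ^ 2 := by
        nlinarith
      exact le_of_pow_le_pow_left₀ two_ne_zero
        (mul_nonneg hθ0 infDist_nonneg) hsq
    have decQ : ∀ k, infDist (q (k + 1)) H' ≤ θ * infDist (q k) H' := by
      intro k
      have A := stepA (k + 1)
      have B := stepB k
      have h1 : θ * infDist (p (k + 1)) E ^ 2 ≤ θ * (θ * infDist (q k) H' ^ 2) :=
        mul_le_mul_of_nonneg_left B hθ0
      have hsq : infDist (q (k + 1)) H' ^ 2 ≤ (θ * infDist (q k) H') ^ 2 := by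
        nlinarith
      exact le_of_pow_le_pow_left₀ two_ne_zero
        (mul_nonneg hθ0 infDist_nonneg) hsq
    have geoP : ∀ k, infDist (p k) E ≤ infDist (p 0) E * θ ^ k := by
      intro k
      induction k with
      | zero => simp
      | succ n ih =>
        calc infDist (p (n + 1)) E ≤ θ * infDist (p n) E := decP n
          _ ≤ θ * (infDist (p 0) E * θ ^ n) := by
            exact mul_le_mul_of_nonneg_left ih hθ0
          _ = infDist (p 0) E * θ ^ (n + 1) := by ring
    have geoQ : ∀ k, infDist (q k) H' ≤ infDist (q 0) H' * θ ^ k := by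
      intro k
      induction k with
      | zero => simp
      | succ n ih =>
        calc infDist (q (n + 1)) H' ≤ θ * infDist (q n) H' := decQ n
          _ ≤ θ * (infDist (q 0) H' * θ ^ n) := mul_le_mul_of_nonneg_left ih hθ0
          _ = infDist (q 0) H' * θ ^ (n + 1) := by ring
    -- Cauchy
    have hcau : CauchySeq p := by
      apply cauchySeq_of_le_geometric θ (2 * infDist (p 0) E) hθ1
      intro n
      obtain ⟨z, hzE, hzd⟩ := hEc.exists_infDist_eq_dist hEne (p n)
      have h1 : dist (p (n + 1)) z ≤ dist (p n) z := fejP z hzE n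
      calc dist (p n) (p (n + 1)) ≤ dist (p n) z + dist z (p (n + 1)) := dist_triangle _ _ _
        _ = dist (p n) z + dist (p (n + 1)) z := by rw [dist_comm z]
        _ ≤ 2 * infDist (p n) E := by rw [← hzd] at h1 ⊢; linarith [hzd ▸ h1]
        _ ≤ 2 * (infDist (p 0) E * θ ^ n) := by linarith [geoP n]
        _ = 2 * infDist (p 0) E * θ ^ n := by ring
    obtain ⟨pstar, hps⟩ := cauchySeq_tendsto_of_complete hcau
    have hθtend : Tendsto (fun k : ℕ => infDist (p 0) E * θ ^ k) atTop (nhds 0) := by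
      have := tendsto_pow_atTop_nhds_zero_of_lt_one hθ0 hθ1
      simpa using this.const_mul (infDist (p 0) E)
    have hd0 : Tendsto (fun k => infDist (p k) E) atTop (nhds 0) :=
      squeeze_zero (fun k => infDist_nonneg) geoP hθtend
    have hpsE : pstar ∈ E := by
      have hcont : Tendsto (fun k => infDist (p k) E) atTop (nhds (infDist pstar E)) :=
        ((continuous_infDist_pt E).tendsto pstar).comp hps
      exact (hEc.mem_iff_infDist_zero hEne).2 (tendsto_nhds_unique hcont hd0)
    have hpb : ∀ k, dist (p k) pstar ≤ 2 * infDist (p k) E := by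
      intro k
      obtain ⟨z, hzE, hzd⟩ := hEc.exists_infDist_eq_dist hEne (p k)
      have hzs : dist pstar z ≤ infDist (p k) E := by
        have htd : Tendsto (fun m => dist (p m) z) atTop (nhds (dist pstar z)) :=
          hps.dist tendsto_const_nhds
        apply le_of_tendsto htd
        filter_upwards [eventually_ge_atTop k] with m hm
        exact hzd ▸ fejP' z hzE k m hm
      calc dist (p k) pstar ≤ dist (p k) z + dist z pstar := dist_triangle _ _ _
        _ ≤ infDist (p k) E + infDist (p k) E := by
            rw [dist_comm z]
            exact add_le_add hzd.ge hzs
        _ = 2 * infDist (p k) E := by ring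
    have hqsH : pstar + v ∈ H' := hHmem.2 (by simpa using hpsE)
    have hqdist : ∀ k, dist (q k) (pstar + v) ≤ dist (p k) pstar := by
      intro k
      rw [dist_eq_norm, dist_eq_norm]
      exact fejQhalf pstar hpsE k
    have hqtend : Tendsto q atTop (nhds (pstar + v)) := by
      rw [tendsto_iff_dist_tendsto_zero]
      exact squeeze_zero (fun k => dist_nonneg) hqdist (tendsto_iff_dist_tendsto_zero.1 hps)
    have hqb : ∀ k, dist (q k) (pstar + v) ≤ 2 * infDist (q k) H' := by
      intro k
      obtain ⟨w, hwH, hwd⟩ := hHc.exists_infDist_eq_dist hHne (q k)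
      have hws : dist (pstar + v) w ≤ infDist (q k) H' := by
        have htd : Tendsto (fun m => dist (q m) w) atTop (nhds (dist (pstar + v) w)) :=
          hqtend.dist tendsto_const_nhds
        apply le_of_tendsto htd
        filter_upwards [eventually_ge_atTop k] with m hm
        exact hwd ▸ fejQ' w hwH k m hm
      calc dist (q k) (pstar + v) ≤ dist (q k) w + dist w (pstar + v) := dist_triangle _ _ _
        _ ≤ infDist (q k) H' + infDist (q k) H' := by
            rw [dist_comm w]
            exact add_le_add hwd.ge hws
        _ = 2 * infDist (q k) H' := by ring
    refine ⟨pstar, hpsE, pstar + v, hqsH, hps, hqtend, fun k => ⟨?_, ?_⟩⟩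
    · have h1 : infDist (p 0) E ≤ ‖p 0 - pstar‖ := by
        rw [← dist_eq_norm]
        exact infDist_le_dist_of_mem hpsE
      have h2 : (0 : ℝ) ≤ θ ^ k := pow_nonneg hθ0 k
      rw [← dist_eq_norm]
      calc dist (p k) pstar ≤ 2 * infDist (p k) E := hpb k
        _ ≤ 2 * (infDist (p 0) E * θ ^ k) := by linarith [geoP k]
        _ ≤ 2 * ‖p 0 - pstar‖ * θ ^ k := by nlinarith
    · have h1 : infDist (q 0) H' ≤ ‖q 0 - (pstar + v)‖ := by
        rw [← dist_eq_norm]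
        exact infDist_le_dist_of_mem hqsH
      have h2 : (0 : ℝ) ≤ θ ^ k := pow_nonneg hθ0 k
      rw [← dist_eq_norm]
      calc dist (q k) (pstar + v) ≤ 2 * infDist (q k) H' := hqb k
        _ ≤ 2 * (infDist (q 0) H' * θ ^ k) := by linarith [geoQ k]
        _ ≤ 2 * ‖q 0 - (pstar + v)‖ * θ ^ k := by nlinarith
  · -- degenerate case
    have hp0E : p 0 ∈ E := by
      by_contra h
      exact hS ⟨p 0, Or.inl hp0, h⟩
    have hqstep : ∀ k, p k ∈ E → q k = p k + v := by
      intro k hk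
      have h1 : dist (p k) (q k) ≤ dist (p k) (p k + v) := (hq k).2 _ (hEmem.1 hk).2
      have h2 : dist (p k) (p k + v) = ‖v‖ := by rw [dist_eq_norm]; simp [norm_sub_rev]
      have h3 : ‖q k - p k‖ ≤ ‖v‖ := by
        rw [← dist_eq_norm, dist_comm]
        linarith
      have := huniq (p k) (hpP k) (q k) (hqQ k) h3
      rw [← this]; abel
    have hconst : ∀ k, p k = p 0 := by
      intro k
      induction k with
      | zero => rfl
      | succ n ih =>
        have hqn : q n = p 0 + v := by rw [← ih]; exact hqstep n (ih ▸ hp0E)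
        have h1 : dist (q n) (p (n + 1)) ≤ dist (q n) (p 0) := (hp n).2 _ hp0
        have h2 : dist (q n) (p 0) = ‖v‖ := by
          rw [hqn, dist_eq_norm]
          simp
        have h3 : ‖q n - p (n + 1)‖ ≤ ‖v‖ := by
          rw [← dist_eq_norm]
          linarith
        have := huniq (p (n + 1)) (hp n).1 (q n) (hqQ n) h3
        have : p (n + 1) = q n - v := by rw [← this]; abel
        rw [this, hqn]
        abel
    have hqconst : ∀ k, q k = p 0 + v := fun k => by
      rw [← hconst k]; exact hqstep k ((hconst k) ▸ hp0E)
    have hq0H : p 0 + v ∈ H' := hHmem.2 (by simpa using hp0E)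
    refine ⟨p 0, hp0E, p 0 + v, hq0H, ?_, ?_, fun k => ⟨?_, ?_⟩⟩
    · have : p = fun _ => p 0 := funext hconst
      rw [this]
      exact tendsto_const_nhds
    · have : q = fun _ => p 0 + v := funext hqconst
      rw [this]
      exact tendsto_const_nhds
    · rw [hconst k]
      simp
    · rw [hqconst k, hqconst 0]
      simp
end
end

section
/- Let P and Q be nonempty closed convex subsets of ℝ^D with E nonempty. For any p ∈ P ∖ E, either κ(p) = 1, or both 1 < κ(p) and κ(p) ≤ κ(Π_{Q'} p). Similarly, for any q ∈ Q' ∖ E, either κ(q) = 1, or both 1 < κ(q) and κ(q) ≤ κ(Π_P q). -/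
open scoped RealInnerProductSpace Pointwise
open Metric Filter

noncomputable section

/-- Key elementary inequality: the distance from `a` to the segment from `0` to `b`
(as a point `t • b`), times `‖b‖`, is at most `‖a‖ * ‖a - b‖`. -/
lemma keyA {H : Type*} [NormedAddCommGroup H] [InnerProductSpace ℝ H] (a b : H) :
    ∃ t : ℝ, 0 ≤ t ∧ t ≤ 1 ∧ ‖a - t • b‖ * ‖b‖ ≤ ‖a‖ * ‖a - b‖ := by
  by_cases hb : b = 0
  · exact ⟨0, le_refl 0, zero_le_one, by
      simp [hb, mul_nonneg (norm_nonneg a) (norm_nonneg a)]⟩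
  have hb2 : (0:ℝ) < ‖b‖ ^ 2 := by
    have := norm_pos_iff.mpr hb
    positivity
  set i : ℝ := inner ℝ a b with hi
  by_cases h0 : i ≤ 0
  · refine ⟨0, le_refl 0, zero_le_one, ?_⟩
    have h1 : ‖a - b‖ ^ 2 = ‖a‖ ^ 2 - 2 * i + ‖b‖ ^ 2 := norm_sub_sq_real a b
    have hbb : ‖b‖ ≤ ‖a - b‖ := by
      nlinarith [norm_nonneg (a - b), norm_nonneg b, sq_nonneg (‖a‖)]
    rw [zero_smul, sub_zero, mul_comm]
    exact mul_le_mul hbb le_rfl (norm_nonneg a) (norm_nonneg _) |>.trans_eq (mul_comm _ _)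
  · push_neg at h0
    by_cases h1 : ‖b‖ ^ 2 ≤ i
    · refine ⟨1, zero_le_one, le_refl 1, ?_⟩
      have hC : i ≤ ‖a‖ * ‖b‖ := real_inner_le_norm a b
      have hba : ‖b‖ ≤ ‖a‖ := by
        nlinarith [norm_nonneg a, norm_nonneg b]
      calc ‖a - (1:ℝ) • b‖ * ‖b‖ = ‖a - b‖ * ‖b‖ := by rw [one_smul]
        _ ≤ ‖a - b‖ * ‖a‖ := mul_le_mul_of_nonneg_left hba (norm_nonneg _)
        _ = ‖a‖ * ‖a - b‖ := mul_comm _ _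
    · push_neg at h1
      set t : ℝ := i / ‖b‖ ^ 2 with ht
      have ht0 : 0 < t := div_pos h0 hb2
      have ht1 : t < 1 := (div_lt_one hb2).mpr h1
      refine ⟨t, ht0.le, ht1.le, ?_⟩
      have hab : ‖a - b‖ ^ 2 = ‖a‖ ^ 2 - 2 * i + ‖b‖ ^ 2 := norm_sub_sq_real a b
      have htb : ‖a - t • b‖ ^ 2 = ‖a‖ ^ 2 - 2 * t * i + t ^ 2 * ‖b‖ ^ 2 := by
        have h := norm_sub_sq_real a (t • b)
        rw [real_inner_smul_right, norm_smul, Real.norm_eq_abs, mul_pow, sq_abs] at h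
        rw [h]; ring
      have hti : t * ‖b‖ ^ 2 = i := div_mul_cancel₀ i hb2.ne'
      have hsq : (‖a - t • b‖ * ‖b‖) ^ 2 ≤ (‖a‖ * ‖a - b‖) ^ 2 := by
        have h2 : ‖a - t • b‖ ^ 2 * ‖b‖ ^ 2 = ‖a‖ ^ 2 * ‖b‖ ^ 2 - i ^ 2 := by
          rw [htb]; nlinarith [hti]
        have h3 : (‖a‖ * ‖a - b‖) ^ 2 = ‖a‖ ^ 2 * (‖a‖ ^ 2 - 2 * i + ‖b‖ ^ 2) := by
          rw [mul_pow, hab]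
        nlinarith [sq_nonneg (‖a‖ ^ 2 - i)]
      have hnn : 0 ≤ ‖a‖ * ‖a - b‖ := mul_nonneg (norm_nonneg _) (norm_nonneg _)
      nlinarith [mul_nonneg (norm_nonneg (a - t • b)) (norm_nonneg b)]

/-- The main one-sided lemma covering both halves of the theorem. -/
lemma side {D : ℕ} {A B E : Set (EuclideanSpace ℝ (Fin D))}
    (hAconv : Convex ℝ A) (hAc : IsClosed A) (hBc : IsClosed B)
    (hEc : IsClosed E) (hEne : E.Nonempty) (hEAB : E = A ∩ B)
    (κ : EuclideanSpace ℝ (Fin D) → ℝ)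
    (hκ : ∀ y, κ y = infDist y E / max (infDist y A) (infDist y B))
    (x : EuclideanSpace ℝ (Fin D)) (hxA : x ∈ A) (hxE : x ∉ E)
    (w : EuclideanSpace ℝ (Fin D)) (hw : IsProjOn B x w) :
    κ x = 1 ∨ (1 < κ x ∧ κ x ≤ κ w) := by
  have hwB : w ∈ B := hw.1
  have hBne : B.Nonempty := ⟨w, hwB⟩
  have hEA : E ⊆ A := by rw [hEAB]; exact Set.inter_subset_left
  have hEB : E ⊆ B := by rw [hEAB]; exact Set.inter_subset_right
  have hAne : A.Nonempty := hEne.mono hEA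
  have hxB : x ∉ B := fun h => hxE (by rw [hEAB]; exact ⟨hxA, h⟩)
  have hdB : 0 < infDist x B := (hBc.notMem_iff_infDist_pos hBne).mp hxB
  have hdA0 : infDist x A = 0 := infDist_zero_of_mem hxA
  have hmax : max (infDist x A) (infDist x B) = infDist x B := by
    rw [hdA0]; exact max_eq_right infDist_nonneg
  have hEx : infDist x B ≤ infDist x E := infDist_le_infDist_of_subset hEB hEne
  have h1 : 1 ≤ κ x := by rw [hκ, hmax]; exact (one_le_div hdB).mpr hEx
  rcases h1.lt_or_eq with hcase | hcase
  · right
    refine ⟨hcase, ?_⟩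
    -- distance from x to w equals infDist x B
    have hdistxw : dist x w = infDist x B := by
      refine le_antisymm ?_ (infDist_le_dist_of_mem hwB)
      by_contra hlt
      push_neg at hlt
      obtain ⟨y, hy, hy'⟩ := (infDist_lt_iff hBne).mp hlt
      exact absurd (hw.2 y hy) (not_le.mpr hy')
    have hlt : infDist x B < infDist x E := by
      have := hcase
      rw [hκ, hmax] at this
      exact (one_lt_div hdB).mp this
    have hwE : w ∉ E := by
      intro h
      have : infDist x E ≤ dist x w := infDist_le_dist_of_mem h
      rw [hdistxw] at this
      exact absurd this (not_le.mpr hlt)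
    have hwA : w ∉ A := fun h => hwE (by rw [hEAB]; exact ⟨h, hwB⟩)
    have hdwA : 0 < infDist w A := (hAc.notMem_iff_infDist_pos hAne).mp hwA
    have hmaxw : max (infDist w A) (infDist w B) = infDist w A := by
      rw [infDist_zero_of_mem hwB]; exact max_eq_left infDist_nonneg
    obtain ⟨e, heE, hwe⟩ := hEc.exists_infDist_eq_dist hEne w
    have heA : e ∈ A := hEA heE
    obtain ⟨t, ht0, ht1, hkey⟩ := keyA (w - x) (e - x)
    have hx' : (1 - t) • x + t • e ∈ A := hAconv hxA heA (by linarith) ht0 (by ring)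
    have h2 : infDist w A ≤ ‖(w - x) - t • (e - x)‖ := by
      have h := infDist_le_dist_of_mem hx' (x := w)
      rw [dist_eq_norm] at h
      have : w - ((1 - t) • x + t • e) = (w - x) - t • (e - x) := by
        simp only [sub_smul, smul_sub, one_smul]; abel
      rwa [this] at h
    have h3 : infDist x E ≤ ‖e - x‖ := by
      have := infDist_le_dist_of_mem heE (x := x)
      rwa [dist_eq_norm, norm_sub_rev] at this
    have h4 : ‖(w - x) - (e - x)‖ = infDist w E := by
      rw [hwe, dist_eq_norm]
      congr 1
      abel
    have h5 : ‖w - x‖ = infDist x B := by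
      rw [← hdistxw, dist_eq_norm, norm_sub_rev]
    rw [hκ x, hκ w, hmax, hmaxw, div_le_div_iff₀ hdB hdwA]
    calc infDist x E * infDist w A ≤ ‖e - x‖ * ‖(w - x) - t • (e - x)‖ :=
          mul_le_mul h3 h2 infDist_nonneg (norm_nonneg _)
      _ = ‖(w - x) - t • (e - x)‖ * ‖e - x‖ := mul_comm _ _
      _ ≤ ‖w - x‖ * ‖(w - x) - (e - x)‖ := hkey
      _ = infDist w E * infDist x B := by rw [h4, h5, mul_comm]
  · exact Or.inl hcase.symm

theorem stmt1 {D : ℕ} (P Q : Set (EuclideanSpace ℝ (Fin D)))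
    (hPne : P.Nonempty) (hQne : Q.Nonempty)
    (hPc : IsClosed P) (hQc : IsClosed Q)
    (hPconv : Convex ℝ P) (hQconv : Convex ℝ Q)
    (v : EuclideanSpace ℝ (Fin D)) (hv : IsProjOn (closure (Q - P)) 0 v)
    (E Q' : Set (EuclideanSpace ℝ (Fin D)))
    (hE : E = {p ∈ P | infDist p Q = sDist P Q})
    (hQ' : Q' = (fun q => q - v) '' Q)
    (hEne : E.Nonempty)
    (κ : EuclideanSpace ℝ (Fin D) → ℝ)
    (hκ : ∀ x, κ x = infDist x E / max (infDist x P) (infDist x Q')) :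
    (∀ p ∈ P \ E, ∀ w, IsProjOn Q' p w →
        κ p = 1 ∨ (1 < κ p ∧ κ p ≤ κ w)) ∧
    (∀ q ∈ Q' \ E, ∀ w, IsProjOn P q w →
        κ q = 1 ∨ (1 < κ q ∧ κ q ≤ κ w)) := by
  -- basic facts about Q'
  have hQ'eq : Q' = (fun x => x + v) ⁻¹' Q := by
    rw [hQ']; ext z
    constructor
    · rintro ⟨q, hq, rfl⟩; simpa using hq
    · intro h; exact ⟨z + v, h, by simp⟩
  have hQ'c : IsClosed Q' := by
    rw [hQ'eq]; exact hQc.preimage (continuous_id.add continuous_const)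
  have hQ'conv : Convex ℝ Q' := by
    rw [hQ']
    have hfun : (fun q : EuclideanSpace ℝ (Fin D) => q - v) = (fun x => -v + x) := by
      funext q; rw [sub_eq_neg_add]
    rw [hfun]
    exact hQconv.translate (-v)
  -- lower bound on distances
  have hlb : ∀ p ∈ P, ∀ q ∈ Q, ‖v‖ ≤ dist p q := by
    intro p hp q hq
    have hz : q - p ∈ closure (Q - P) := subset_closure (Set.sub_mem_sub hq hp)
    have h := hv.2 _ hz
    rw [dist_eq_norm, dist_eq_norm, zero_sub, zero_sub, norm_neg, norm_neg] at h
    rwa [dist_eq_norm, norm_sub_rev]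
  have hbdd : BddBelow (Set.image2 dist P Q) := by
    refine ⟨0, ?_⟩
    rintro r ⟨p, _, q, _, rfl⟩
    exact dist_nonneg
  have hne2 : (Set.image2 dist P Q).Nonempty := Set.Nonempty.image2 hPne hQne
  -- sDist P Q = ‖v‖
  have hsd : sDist P Q = ‖v‖ := by
    refine le_antisymm ?_ ?_
    · refine le_of_forall_pos_le_add ?_
      intro ε hε
      obtain ⟨z, hz, hzd⟩ := Metric.mem_closure_iff.mp hv.1 ε hε
      obtain ⟨q, hq, p, hp, rfl⟩ := Set.mem_sub.mp hz
      have h1 : sDist P Q ≤ dist p q := csInf_le hbdd (Set.mem_image2_of_mem hp hq)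
      have h2 : dist p q ≤ ‖v‖ + ε := by
        have : dist p q = ‖v + (q - p - v)‖ := by
          rw [dist_comm, dist_eq_norm]; congr 1; abel
        rw [this]
        refine (norm_add_le _ _).trans ?_
        have h3 : ‖q - p - v‖ < ε := by
          rw [← neg_sub, norm_neg, ← dist_eq_norm]
          exact hzd
        linarith
      linarith
    · refine le_csInf hne2 ?_
      rintro r ⟨p, hp, q, hq, rfl⟩
      exact hlb p hp q hq
  -- E = P ∩ Q'
  have hconvQP : Convex ℝ (closure (Q - P)) := (hQconv.sub hPconv).closure
  have hEPQ' : E = P ∩ Q' := by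
    ext x
    constructor
    · intro hx
      rw [hE] at hx
      obtain ⟨hxP, hxd⟩ := hx
      obtain ⟨q, hqQ, hq⟩ := hQc.exists_infDist_eq_dist hQne x
      have hzn : ‖q - x‖ = ‖v‖ := by
        rw [← dist_eq_norm, dist_comm, ← hq, hxd, hsd]
      have hz : q - x ∈ closure (Q - P) := subset_closure (Set.sub_mem_sub hqQ hxP)
      set z := q - x with hzdef
      -- uniqueness of minimal norm point: v = z
      have hm : (1/2 : ℝ) • v + (1/2 : ℝ) • z ∈ closure (Q - P) :=
        hconvQP hv.1 hz (by norm_num) (by norm_num) (by norm_num)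
      have hvm : ‖v‖ ≤ ‖(1/2 : ℝ) • v + (1/2 : ℝ) • z‖ := by
        have h := hv.2 _ hm
        rwa [dist_eq_norm, dist_eq_norm, zero_sub, zero_sub, norm_neg, norm_neg] at h
      have hvz : v = z := by
        have e1 : ‖v + z‖ ^ 2 = ‖v‖ ^ 2 + 2 * ⟪v, z⟫ + ‖z‖ ^ 2 := norm_add_sq_real v z
        have e2 : ‖v - z‖ ^ 2 = ‖v‖ ^ 2 - 2 * ⟪v, z⟫ + ‖z‖ ^ 2 := norm_sub_sq_real v z
        have e3 : ‖(1/2 : ℝ) • v + (1/2 : ℝ) • z‖ = (1/2 : ℝ) * ‖v + z‖ := by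
          rw [← smul_add, norm_smul, Real.norm_eq_abs]
          norm_num
        rw [e3] at hvm
        have hvz2 : ‖v - z‖ ^ 2 ≤ 0 := by nlinarith [norm_nonneg (v + z), norm_nonneg v]
        have : ‖v - z‖ = 0 := by nlinarith [norm_nonneg (v - z)]
        exact sub_eq_zero.mp (norm_eq_zero.mp this)
      refine ⟨hxP, ?_⟩
      rw [hQ']
      refine ⟨q, hqQ, ?_⟩
      rw [hvz]
      simp [hzdef]
    · rintro ⟨hxP, hxQ'⟩
      rw [hQ'] at hxQ'
      obtain ⟨q, hqQ, rfl⟩ := hxQ'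
      rw [hE]
      refine ⟨hxP, ?_⟩
      refine le_antisymm ?_ ?_
      · have : infDist (q - v) Q ≤ dist (q - v) q := infDist_le_dist_of_mem hqQ
        rw [hsd]
        refine this.trans ?_
        rw [dist_eq_norm]
        simp
      · by_contra hlt
        push_neg at hlt
        obtain ⟨y, hy, hy'⟩ := (infDist_lt_iff hQne).mp hlt
        have := hlb _ hxP y hy
        rw [hsd] at hy'
        linarith
  have hEc : IsClosed E := by
    rw [hEPQ']
    exact hPc.inter hQ'c
  constructor
  · intro p hp w hw
    exact side hPconv hPc hQ'c hEc hEne hEPQ' κ hκ p hp.1 hp.2 w hw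
  · intro q hq w hw
    refine side hQ'conv hQ'c hPc hEc hEne (by rw [hEPQ', Set.inter_comm]) κ
      (fun y => by rw [hκ, max_comm]) q hq.1 hq.2 w hw
end
end

section
/- Let S (of size J × D) and T (of size K × D) be real matrices with orthonormal rows. If every singular value of S Tᵀ equals one, then c_F(null(S), null(T)) = 0. Otherwise, c_F(null(S), null(T)) equals the largest singular value of S Tᵀ that is strictly less than one. -/
open scoped RealInnerProductSpace
open Matrix

noncomputable section

/-- The cosine of the Friedrichs angle between two subspaces. -/
def friedrichs {H : Type*} [NormedAddCommGroup H] [InnerProductSpace ℝ H]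
    (U V : Submodule ℝ H) : ℝ :=
  sSup {t | ∃ u ∈ U ⊓ (U ⊓ V)ᗮ, ∃ v ∈ V ⊓ (U ⊓ V)ᗮ,
    ‖u‖ ≤ 1 ∧ ‖v‖ ≤ 1 ∧ t = ⟪u, v⟫}

namespace Fried

variable {H : Type*} [NormedAddCommGroup H] [InnerProductSpace ℝ H] [FiniteDimensional ℝ H]

/-- Orthogonal projection, as a map `H → H`. -/
def pr (K : Submodule ℝ H) (x : H) : H := K.orthogonalProjectionOnto x

lemma pr_mem (K : Submodule ℝ H) (x : H) : pr K x ∈ K := (K.orthogonalProjectionOnto x).2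

lemma pr_eq_self {K : Submodule ℝ H} {x : H} (h : x ∈ K) : pr K x = x :=
  Submodule.starProjection_eq_self_iff.mpr h

lemma sub_pr_mem (K : Submodule ℝ H) (x : H) : x - pr K x ∈ Kᗮ :=
  K.sub_starProjection_mem_orthogonal x

lemma pr_add (K : Submodule ℝ H) (x y : H) : pr K (x + y) = pr K x + pr K y := by
  simp [pr]

lemma pr_sub (K : Submodule ℝ H) (x y : H) : pr K (x - y) = pr K x - pr K y := by
  simp [pr]

lemma pr_smul (K : Submodule ℝ H) (a : ℝ) (x : H) : pr K (a • x) = a • pr K x := by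
  simp [pr]

lemma inner_pr_left (K : Submodule ℝ H) (x y : H) : ⟪pr K x, y⟫ = ⟪x, pr K y⟫ :=
  K.inner_starProjection_left_eq_right x y

lemma pr_idem (K : Submodule ℝ H) (x : H) : pr K (pr K x) = pr K x :=
  pr_eq_self (pr_mem K x)

lemma inner_pr_self (K : Submodule ℝ H) (x : H) : ⟪x, pr K x⟫ = ‖pr K x‖ ^ 2 := by
  have h := inner_pr_left K x (pr K x)
  rw [pr_idem] at h
  rw [← h, real_inner_self_eq_norm_sq]

lemma norm_pr_le (K : Submodule ℝ H) (x : H) : ‖pr K x‖ ≤ ‖x‖ := by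
  have h : ‖x‖ ^ 2 = ‖pr K x‖ ^ 2 + ‖x - pr K x‖ ^ 2 := by
    have := norm_add_sq_real (pr K x) (x - pr K x)
    have hz : ⟪pr K x, x - pr K x⟫ = 0 := by
      have := sub_pr_mem K x
      exact (Submodule.mem_orthogonal K (x - pr K x)).mp this _ (pr_mem K x)
    rw [hz] at this
    simpa using this
  nlinarith [norm_nonneg (pr K x), norm_nonneg x, norm_nonneg (x - pr K x), sq_nonneg (‖x - pr K x‖)]

lemma pr_eq_zero {K : Submodule ℝ H} {x : H} (h : x ∈ Kᗮ) : pr K x = 0 := by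
  have : (K.orthogonalProjectionOnto x : H) = 0 := by
    rw [Submodule.orthogonalProjectionOnto_apply_of_mem_orthogonal h]
    simp
  exact this

lemma pr_orth (K : Submodule ℝ H) (x : H) : pr Kᗮ x = x - pr K x := by
  refine Submodule.eq_starProjection_of_mem_orthogonal (sub_pr_mem K x) ?_
  have : x - (x - pr K x) = pr K x := by abel
  rw [this]
  exact K.le_orthogonal_orthogonal (pr_mem K x)



lemma inner_pr_right (K : Submodule ℝ H) (x y : H) : ⟪x, pr K y⟫ = ⟪pr K x, y⟫ :=
  (inner_pr_left K x y).symm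

/-- The compression of the orthogonal projection onto `K` to `W`. -/
def compOp (W K : Submodule ℝ H) : W →ₗ[ℝ] W :=
  ((W.orthogonalProjectionOnto).toLinearMap.comp
    ((K.subtype.comp (K.orthogonalProjectionOnto).toLinearMap).comp W.subtype))

lemma compOp_apply (W K : Submodule ℝ H) (u : W) :
    ((compOp W K u : W) : H) = pr W (pr K (u : H)) := rfl

lemma inner_compOp (W K : Submodule ℝ H) (u w : W) :
    ⟪compOp W K u, w⟫ = ⟪(u : H), pr K (w : H)⟫ := by
  rw [Submodule.coe_inner, compOp_apply, inner_pr_left, pr_eq_self w.2, inner_pr_left]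

lemma compOp_symm (W K : Submodule ℝ H) : (compOp W K).IsSymmetric := by
  intro u w
  rw [inner_compOp]
  have h2 : ⟪u, compOp W K w⟫ = ⟪(u : H), pr W (pr K (w : H))⟫ := by
    rw [Submodule.coe_inner, compOp_apply]
  rw [h2, inner_pr_right W (u : H) (pr K (w : H)), pr_eq_self u.2]

lemma inner_compOp_self (W K : Submodule ℝ H) (u : W) :
    ⟪compOp W K u, u⟫ = ‖pr K (u : H)‖ ^ 2 := by
  rw [inner_compOp, inner_pr_self]

def Usub (U V : Submodule ℝ H) : Submodule ℝ H := U ⊓ (U ⊓ V)ᗮ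

def B (U V : Submodule ℝ H) : Usub U V →ₗ[ℝ] Usub U V := compOp (Usub U V) V

lemma inner_B_self (U V : Submodule ℝ H) (u : Usub U V) :
    ⟪B U V u, u⟫ = ‖pr V (u : H)‖ ^ 2 :=
  inner_compOp_self (Usub U V) V u

/-- The largest eigenvalue of `B`, as a Rayleigh supremum. -/
def lam (U V : Submodule ℝ H) : ℝ :=
  ⨆ x : {x : Usub U V // x ≠ 0}, ⟪B U V x, (x : Usub U V)⟫ / ‖(x : Usub U V)‖ ^ 2

lemma rayleigh_bddAbove (U V : Submodule ℝ H) :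
    BddAbove (Set.range fun x : {x : Usub U V // x ≠ 0} =>
      ⟪B U V x, (x : Usub U V)⟫ / ‖(x : Usub U V)‖ ^ 2) := by
  refine ⟨1, ?_⟩
  rintro t ⟨x, rfl⟩
  have hx : (0:ℝ) < ‖(x : Usub U V)‖ := by
    simpa [norm_pos_iff] using x.2
  have h1 : ⟪B U V x, (x : Usub U V)⟫ ≤ ‖(x : Usub U V)‖ ^ 2 := by
    rw [inner_B_self]
    have h := norm_pr_le V ((x : Usub U V) : H)
    have hc : ‖((x : Usub U V) : H)‖ = ‖(x : Usub U V)‖ := rfl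
    nlinarith [norm_nonneg (pr V ((x : Usub U V) : H))]
  rw [div_le_one (by positivity)]
  exact h1

lemma rayleigh_le_lam (U V : Submodule ℝ H) {u : Usub U V} (hu : u ≠ 0) :
    ⟪B U V u, u⟫ / ‖u‖ ^ 2 ≤ lam U V :=
  le_ciSup (rayleigh_bddAbove U V) (⟨u, hu⟩ : {x : Usub U V // x ≠ 0})

lemma quad_nonneg (U V : Submodule ℝ H) (u : Usub U V) : 0 ≤ ⟪B U V u, u⟫ := by
  rw [inner_B_self]; positivity

lemma lam_nonneg (U V : Submodule ℝ H) (hU : Usub U V ≠ ⊥) : 0 ≤ lam U V := by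
  obtain ⟨u, hu, hne⟩ := Submodule.exists_mem_ne_zero_of_ne_bot hU
  have hun : (⟨u, hu⟩ : Usub U V) ≠ 0 := by simpa using hne
  have h := rayleigh_le_lam U V hun
  have h0 := quad_nonneg U V (⟨u, hu⟩ : Usub U V)
  have hx : (0:ℝ) < ‖(⟨u, hu⟩ : Usub U V)‖ := by simpa [norm_pos_iff] using hun
  have : 0 ≤ ⟪B U V ⟨u, hu⟩, (⟨u, hu⟩ : Usub U V)⟫ / ‖(⟨u, hu⟩ : Usub U V)‖ ^ 2 := by positivity
  linarith

lemma quad_le_lam (U V : Submodule ℝ H) (hUb : Usub U V ≠ ⊥) {u : Usub U V} (hn : ‖u‖ ≤ 1) :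
    ⟪B U V u, u⟫ ≤ lam U V := by
  rcases eq_or_ne u 0 with rfl | hu
  · simpa using lam_nonneg U V hUb
  have h := rayleigh_le_lam U V hu
  have hx : (0:ℝ) < ‖u‖ := by simpa [norm_pos_iff] using hu
  rw [div_le_iff₀ (by positivity)] at h
  have hl : 0 ≤ lam U V := lam_nonneg U V hUb
  have h3 : ‖u‖ ^ 2 ≤ 1 := by nlinarith
  nlinarith

lemma hasEigenvalue_lam (U V : Submodule ℝ H) (hU : Usub U V ≠ ⊥) :
    Module.End.HasEigenvalue (B U V) (lam U V) := by
  haveI : Nontrivial (Usub U V) := Submodule.nontrivial_iff_ne_bot.mpr hU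
  have := (compOp_symm (Usub U V) V).hasEigenvalue_iSup_of_finiteDimensional
  simpa [lam, B] using this

section Fr

variable (U V : Submodule ℝ H)

def frSet : Set ℝ :=
  {t | ∃ u ∈ U ⊓ (U ⊓ V)ᗮ, ∃ v ∈ V ⊓ (U ⊓ V)ᗮ, ‖u‖ ≤ 1 ∧ ‖v‖ ≤ 1 ∧ t = ⟪u, v⟫}

lemma friedrichs_def : friedrichs U V = sSup (frSet U V) := rfl

lemma zero_mem_frSet : (0:ℝ) ∈ frSet U V :=
  ⟨0, Submodule.zero_mem _, 0, Submodule.zero_mem _, by simp, by simp, by simp⟩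

lemma frSet_le_one {t : ℝ} (ht : t ∈ frSet U V) : t ≤ 1 := by
  obtain ⟨u, hu, v, hv, hnu, hnv, rfl⟩ := ht
  calc ⟪u, v⟫ ≤ ‖u‖ * ‖v‖ := real_inner_le_norm u v
    _ ≤ 1 := mul_le_one₀ hnu (norm_nonneg v) hnv

lemma bddAbove_frSet : BddAbove (frSet U V) := ⟨1, fun _ ht => frSet_le_one U V ht⟩

lemma friedrichs_nonneg : 0 ≤ friedrichs U V :=
  le_csSup (bddAbove_frSet U V) (zero_mem_frSet U V)

lemma le_friedrichs {t : ℝ} (ht : t ∈ frSet U V) : t ≤ friedrichs U V :=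
  le_csSup (bddAbove_frSet U V) ht

lemma friedrichs_le {c : ℝ} (h : ∀ t ∈ frSet U V, t ≤ c) : friedrichs U V ≤ c :=
  csSup_le ⟨0, zero_mem_frSet U V⟩ h

lemma friedrichs_bot (h : Usub U V = ⊥) : friedrichs U V = 0 := by
  refine le_antisymm (friedrichs_le U V ?_) (friedrichs_nonneg U V)
  rintro t ⟨u, hu, v, hv, _, _, rfl⟩
  have : u ∈ Usub U V := hu
  rw [h, Submodule.mem_bot] at this
  simp [this]

lemma eigen_lt_one {a : ℝ} {u : Usub U V} (hu : u ≠ 0) (heig : B U V u = a • u) :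
    a < 1 := by
  have hc : ((u : Usub U V) : H) ≠ 0 := by
    simpa [Submodule.coe_eq_zero] using hu
  have hcn : (0:ℝ) < ‖(u : H)‖ := by simpa [norm_pos_iff] using hc
  have hq : ⟪(u : H), pr V (u : H)⟫ = a * ‖(u : H)‖ ^ 2 := by
    have h1 : ⟪B U V u, u⟫ = ⟪(u : H), pr V (u : H)⟫ := inner_compOp (Usub U V) V u u
    rw [heig] at h1
    rw [← h1, real_inner_smul_left, real_inner_self_eq_norm_sq]
    norm_num
  have hq2 : ‖pr V (u : H)‖ ^ 2 = a * ‖(u : H)‖ ^ 2 := by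
    rw [← inner_pr_self, hq]
  have hs : ‖(u : H) - pr V (u : H)‖ ^ 2 = (1 - a) * ‖(u : H)‖ ^ 2 := by
    have := norm_sub_sq_real (u : H) (pr V (u : H))
    rw [hq, hq2] at this
    rw [this]; ring
  have ha1 : a ≤ 1 := by
    nlinarith [sq_nonneg ‖(u : H) - pr V (u : H)‖, pow_pos hcn 2]
  rcases lt_or_eq_of_le ha1 with h | h
  · exact h
  exfalso
  rw [h] at hs
  have hz : (u : H) - pr V (u : H) = 0 := by
    have : ‖(u : H) - pr V (u : H)‖ = 0 := by nlinarith [norm_nonneg ((u : H) - pr V (u : H))]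
    simpa using this
  have huv : (u : H) ∈ V := by
    have : (u : H) = pr V (u : H) := by
      have := sub_eq_zero.mp hz; linear_combination (norm := module) this
    rw [this]; exact pr_mem V _
  have hmem : (u : H) ∈ U ⊓ V := ⟨u.2.1, huv⟩
  have horth : (u : H) ∈ (U ⊓ V)ᗮ := u.2.2
  have : ⟪(u : H), (u : H)⟫ = (0:ℝ) :=
    (Submodule.mem_orthogonal (U ⊓ V) (u : H)).mp horth _ hmem
  rw [inner_self_eq_zero] at this
  exact hc this

lemma friedrichs_eq_sqrt (hU : Usub U V ≠ ⊥) :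
    friedrichs U V = Real.sqrt (lam U V) := by
  have hlam0 : 0 ≤ lam U V := lam_nonneg U V hU
  refine le_antisymm ?_ ?_
  · refine friedrichs_le U V ?_
    rintro t ⟨u, hu, v, hv, hnu, hnv, rfl⟩
    have hz : ⟪u - pr V u, v⟫ = 0 := by
      have h1 := sub_pr_mem V u
      exact (Submodule.mem_orthogonal' V (u - pr V u)).mp h1 v hv.1
    have ht : ⟪u, v⟫ = ⟪pr V u, v⟫ := by
      have := inner_sub_left (𝕜 := ℝ) u (pr V u) v
      rw [hz] at this
      linarith
    have h2 : ⟪pr V u, v⟫ ≤ ‖pr V u‖ := by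
      calc ⟪pr V u, v⟫ ≤ ‖pr V u‖ * ‖v‖ := real_inner_le_norm _ _
        _ ≤ ‖pr V u‖ * 1 := by
            have := norm_nonneg (pr V u); nlinarith
        _ = ‖pr V u‖ := mul_one _
    have h3 : ‖pr V u‖ ^ 2 ≤ lam U V := by
      have hq := inner_B_self U V ⟨u, hu⟩
      have := quad_le_lam U V hU (u := ⟨u, hu⟩) (by simpa using hnu)
      rw [hq] at this
      exact this
    have h4 : ‖pr V u‖ ≤ Real.sqrt (lam U V) := by
      rw [← Real.sqrt_sq (norm_nonneg (pr V u))]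
      exact Real.sqrt_le_sqrt h3
    linarith
  · obtain ⟨u₀, hu₀⟩ := (hasEigenvalue_lam U V hU).exists_hasEigenvector
    have heig : B U V u₀ = lam U V • u₀ := Module.End.mem_eigenspace_iff.mp hu₀.1
    have hu₀ne : u₀ ≠ 0 := hu₀.2
    have hc : ((u₀ : Usub U V) : H) ≠ 0 := by simpa [Submodule.coe_eq_zero] using hu₀ne
    have hcn : (0:ℝ) < ‖(u₀ : H)‖ := by simpa [norm_pos_iff] using hc
    rcases eq_or_lt_of_le hlam0 with h0 | hpos
    · rw [← h0, Real.sqrt_zero]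
      exact friedrichs_nonneg U V
    set c := ‖(u₀ : H)‖ with hcdef
    set u₁ := c⁻¹ • ((u₀ : Usub U V) : H) with hu₁def
    have hcne : c ≠ 0 := ne_of_gt hcn
    have hu₁mem : u₁ ∈ U ⊓ (U ⊓ V)ᗮ := Submodule.smul_mem _ _ u₀.2
    have hu₁norm : ‖u₁‖ = 1 := by
      rw [hu₁def, norm_smul, Real.norm_eq_abs, abs_inv, abs_of_pos hcn]
      exact inv_mul_cancel₀ hcne
    have hq0 : ⟪(u₀ : H), pr V (u₀ : H)⟫ = lam U V * c ^ 2 := by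
      have h1 : ⟪B U V u₀, u₀⟫ = ⟪(u₀ : H), pr V (u₀ : H)⟫ := inner_compOp (Usub U V) V u₀ u₀
      rw [heig] at h1
      rw [← h1, real_inner_smul_left, real_inner_self_eq_norm_sq]
      norm_num
      exact Or.inl rfl
    have hq1 : ⟪u₁, pr V u₁⟫ = lam U V := by
      rw [hu₁def, pr_smul, real_inner_smul_left, real_inner_smul_right, hq0]
      have hrw : c⁻¹ * (c⁻¹ * (lam U V * c ^ 2)) = (c⁻¹ * c) * ((c⁻¹ * c) * lam U V) := by
        ring
      rw [hrw, inv_mul_cancel₀ hcne, one_mul, one_mul]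
    have hnorm1 : ‖pr V u₁‖ = Real.sqrt (lam U V) := by
      have := inner_pr_self V u₁
      rw [hq1] at this
      rw [← Real.sqrt_sq (norm_nonneg (pr V u₁)), ← this]
    set v := (Real.sqrt (lam U V))⁻¹ • pr V u₁ with hvdef
    have hsq : Real.sqrt (lam U V) ≠ 0 := by
      positivity
    have hv2 : v ∈ (U ⊓ V)ᗮ := by
      rw [Submodule.mem_orthogonal]
      intro n hn
      rw [hvdef, real_inner_smul_right]
      have h5 : ⟪n, pr V u₁⟫ = ⟪n, u₁⟫ := by
        rw [inner_pr_right, pr_eq_self hn.2]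
      rw [h5]
      have h6 := (Submodule.mem_orthogonal (U ⊓ V) u₁).mp hu₁mem.2 n hn
      rw [h6, mul_zero]
    have hvmem : v ∈ V ⊓ (U ⊓ V)ᗮ :=
      Submodule.mem_inf.mpr ⟨Submodule.smul_mem _ _ (pr_mem V u₁), hv2⟩
    have hvnorm : ‖v‖ = 1 := by
      rw [hvdef, norm_smul, hnorm1, Real.norm_eq_abs, abs_inv,
        abs_of_pos (show (0:ℝ) < Real.sqrt (lam U V) by positivity)]
      exact inv_mul_cancel₀ hsq
    have hinner : ⟪u₁, v⟫ = Real.sqrt (lam U V) := by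
      rw [hvdef, real_inner_smul_right, hq1]
      have hms : lam U V = Real.sqrt (lam U V) * Real.sqrt (lam U V) :=
        (Real.mul_self_sqrt hlam0).symm
      nth_rewrite 2 [hms]
      rw [← mul_assoc, inv_mul_cancel₀ hsq, one_mul]
    refine le_friedrichs U V ?_
    exact ⟨u₁, hu₁mem, v, hvmem, le_of_eq hu₁norm, le_of_eq hvnorm, hinner.symm⟩

end Fr

section Eigs

variable (U V : Submodule ℝ H)

/-- Eigenvalues of the compression of `pr V` to `U`. -/
def eigsOn : Set ℝ := {a | ∃ z, z ∈ U ∧ z ≠ 0 ∧ pr U (pr V z) = a • z}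

variable {U V}

lemma quad_of_eig {a : ℝ} {z : H} (hzU : z ∈ U) (heq : pr U (pr V z) = a • z) :
    ⟪z, pr V z⟫ = a * ‖z‖ ^ 2 := by
  have h1 : ⟪z, pr U (pr V z)⟫ = ⟪pr U z, pr V z⟫ := inner_pr_right U z _
  rw [pr_eq_self hzU] at h1
  rw [← h1, heq, real_inner_smul_right, real_inner_self_eq_norm_sq]

lemma eigsOn_mem_Icc {a : ℝ} (ha : a ∈ eigsOn U V) : 0 ≤ a ∧ a ≤ 1 := by
  obtain ⟨z, hzU, hzne, heq⟩ := ha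
  have hzn : (0:ℝ) < ‖z‖ := by simpa [norm_pos_iff] using hzne
  have hq : ⟪z, pr V z⟫ = a * ‖z‖ ^ 2 := quad_of_eig hzU heq
  have hq2 : ‖pr V z‖ ^ 2 = a * ‖z‖ ^ 2 := by rw [← inner_pr_self, hq]
  have hle := norm_pr_le V z
  constructor
  · nlinarith [sq_nonneg ‖pr V z‖, pow_pos hzn 2]
  · nlinarith [norm_nonneg (pr V z), pow_pos hzn 2]

lemma A_mem_Usub {u : H} (hu : u ∈ Usub U V) : pr U (pr V u) ∈ Usub U V := by
  refine Submodule.mem_inf.mpr ⟨pr_mem U _, ?_⟩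
  rw [Submodule.mem_orthogonal]
  intro n hn
  rw [inner_pr_right, pr_eq_self hn.1, inner_pr_right, pr_eq_self hn.2]
  exact (Submodule.mem_orthogonal (U ⊓ V) u).mp hu.2 n hn

lemma prUsub_eq {u : H} (hu : u ∈ Usub U V) :
    pr (Usub U V) (pr V u) = pr U (pr V u) :=
  Submodule.eq_starProjection_of_mem_orthogonal (A_mem_Usub hu)
    (Submodule.orthogonal_le inf_le_left (sub_pr_mem U (pr V u)))

lemma eigsOn_to_B {a : ℝ} (ha : a ∈ eigsOn U V) (ha1 : a ≠ 1) :
    ∃ u : Usub U V, u ≠ 0 ∧ B U V u = a • u := by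
  obtain ⟨z, hzU, hzne, heq⟩ := ha
  set n := pr (U ⊓ V) z with hndef
  have hnN : n ∈ U ⊓ V := pr_mem _ z
  have hzn : z - n ∈ Usub U V :=
    Submodule.mem_inf.mpr ⟨Submodule.sub_mem U hzU hnN.1, sub_pr_mem _ z⟩
  have hAz' : pr U (pr V (z - n)) = a • (z - n) + (a - 1) • n := by
    rw [pr_sub, pr_eq_self hnN.2, pr_sub, pr_eq_self hnN.1, heq]
    module
  have hsub : (a - 1) • n ∈ Usub U V := by
    have h1 : pr U (pr V (z - n)) ∈ Usub U V := A_mem_Usub hzn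
    have h2 : a • (z - n) ∈ Usub U V := Submodule.smul_mem _ _ hzn
    have h3 : (a - 1) • n = pr U (pr V (z - n)) - a • (z - n) := by
      rw [hAz']; abel
    rw [h3]; exact Submodule.sub_mem _ h1 h2
  have hn0 : n = 0 := by
    have h4 : (a - 1) • n ∈ (U ⊓ V)ᗮ := hsub.2
    have h5 : (a - 1) • n ∈ U ⊓ V := Submodule.smul_mem _ _ hnN
    have h6 : ⟪(a-1) • n, (a-1) • n⟫ = (0:ℝ) :=
      (Submodule.mem_orthogonal (U ⊓ V) _).mp h4 _ h5
    rw [inner_self_eq_zero] at h6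
    rcases smul_eq_zero.mp h6 with h | h
    · exact absurd (by linarith [sub_eq_zero.mp (by linarith [h] : a - 1 = 0)] : a = 1) ha1
    · exact h
  have hzUs : z ∈ Usub U V := by
    have := hzn; rwa [hn0, sub_zero] at this
  refine ⟨⟨z, hzUs⟩, by simpa using hzne, ?_⟩
  apply Subtype.ext
  show pr (Usub U V) (pr V z) = ((a • (⟨z, hzUs⟩ : Usub U V) : Usub U V) : H)
  rw [prUsub_eq hzUs, heq]
  rfl

lemma B_to_eigsOn {a : ℝ} {u : Usub U V} (hu : u ≠ 0) (heig : B U V u = a • u) :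
    a ∈ eigsOn U V := by
  refine ⟨(u : H), u.2.1, by simpa [Submodule.coe_eq_zero] using hu, ?_⟩
  rw [← prUsub_eq u.2]
  have : ((B U V u : Usub U V) : H) = pr (Usub U V) (pr V (u : H)) := rfl
  rw [← this, heig]
  rfl

lemma eigsOn_orthogonal {a : ℝ} (ha : a ∈ eigsOn U V) (h0 : a ≠ 0) (h1 : a ≠ 1) :
    a ∈ eigsOn Uᗮ Vᗮ := by
  obtain ⟨z, hzU, hzne, heq⟩ := ha
  have hzn : (0:ℝ) < ‖z‖ := by simpa [norm_pos_iff] using hzne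
  set w := pr V z - a • z with hwdef
  have hwU : w ∈ Uᗮ := by
    have := sub_pr_mem U (pr V z)
    rwa [heq] at this
  have hwne : w ≠ 0 := by
    intro hw
    have hpv : pr V z = a • z := by
      have := sub_eq_zero.mp hw; exact this
    have h1' : ‖pr V z‖ ^ 2 = a ^ 2 * ‖z‖ ^ 2 := by
      rw [hpv, norm_smul, Real.norm_eq_abs, mul_pow, sq_abs]
    have h2' : ‖pr V z‖ ^ 2 = a * ‖z‖ ^ 2 := by
      rw [← inner_pr_self, quad_of_eig hzU heq]
    have : a * (a - 1) = 0 := by nlinarith [pow_pos hzn 2]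
    rcases mul_eq_zero.mp this with h | h
    · exact h0 h
    · exact h1 (by linarith)
  refine ⟨w, hwU, hwne, ?_⟩
  have c1 : pr V w = (1 - a) • pr V z := by
    rw [hwdef, pr_sub, pr_smul, pr_idem]
    module
  have c2 : pr Vᗮ w = a • (pr V z - z) := by
    rw [pr_orth, c1, hwdef]
    module
  have hprUoz : pr Uᗮ z = 0 := by
    rw [pr_orth, pr_eq_self hzU, sub_self]
  have hprUopv : pr Uᗮ (pr V z) = w := by
    rw [pr_orth, heq, hwdef]
  rw [c2, pr_smul, pr_sub, hprUoz, hprUopv, sub_zero]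

lemma eigsOn_orthogonal_iff {a : ℝ} (h0 : a ≠ 0) (h1 : a ≠ 1) :
    a ∈ eigsOn Uᗮ Vᗮ ↔ a ∈ eigsOn U V := by
  constructor
  · intro h
    have := eigsOn_orthogonal h h0 h1
    rwa [Submodule.orthogonal_orthogonal, Submodule.orthogonal_orthogonal] at this
  · intro h
    exact eigsOn_orthogonal h h0 h1

end Eigs

end Fried

/-- The nullspace `{x : Wx = 0}` of a matrix, as a subspace of Euclidean space. -/
def nullSpace {m D : ℕ} (W : Matrix (Fin m) (Fin D) ℝ) :
    Submodule ℝ (EuclideanSpace ℝ (Fin D)) :=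
  LinearMap.ker (W.mulVecLin.comp (WithLp.linearEquiv 2 ℝ (Fin D → ℝ)).toLinearMap)

/-- `σ` is a singular value of the matrix `M`: `σ ≥ 0` and `σ²` is an
eigenvalue of `M * Mᵀ`. -/
def IsSingularValue {J K : ℕ} (M : Matrix (Fin J) (Fin K) ℝ) (σ : ℝ) : Prop :=
  0 ≤ σ ∧ ∃ x : Fin J → ℝ, x ≠ 0 ∧ (M * Mᵀ).mulVec x = σ ^ 2 • x

namespace Fried

variable {J K D : ℕ}

/-- Abbreviation for the equivalence between Euclidean space and functions. -/
abbrev ee (D : ℕ) : EuclideanSpace ℝ (Fin D) ≃ₗ[ℝ] (Fin D → ℝ) :=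
  WithLp.linearEquiv 2 ℝ (Fin D → ℝ)

lemma mem_null (S : Matrix (Fin J) (Fin D) ℝ) (z : EuclideanSpace ℝ (Fin D)) :
    z ∈ nullSpace S ↔ S.mulVec (ee D z) = 0 := by
  simp [nullSpace, LinearMap.mem_ker]

lemma inner_eq_dot (x y : EuclideanSpace ℝ (Fin D)) : ⟪x, y⟫ = (ee D x) ⬝ᵥ (ee D y) := by
  simp [PiLp.inner_apply, dotProduct, mul_comm]

variable {S : Matrix (Fin J) (Fin D) ℝ} {T : Matrix (Fin K) (Fin D) ℝ}

lemma range_mem_orthNull (x : Fin J → ℝ) :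
    (ee D).symm (Sᵀ.mulVec x) ∈ (nullSpace S)ᗮ := by
  rw [Submodule.mem_orthogonal]
  intro y hy
  rw [inner_eq_dot, LinearEquiv.apply_symm_apply, dotProduct_mulVec, vecMul_transpose,
    (mem_null S y).mp hy, zero_dotProduct]

lemma SST_id (hS : S * Sᵀ = 1) (y : Fin J → ℝ) : S.mulVec (Sᵀ.mulVec y) = y := by
  rw [mulVec_mulVec, hS, one_mulVec]

lemma pr_orthNull (hS : S * Sᵀ = 1) (z : EuclideanSpace ℝ (Fin D)) :
    pr (nullSpace S)ᗮ z = (ee D).symm ((Sᵀ * S).mulVec (ee D z)) := by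
  refine Submodule.eq_starProjection_of_mem_orthogonal ?_ ?_
  · rw [← mulVec_mulVec]
    exact range_mem_orthNull (S.mulVec (ee D z))
  · rw [Submodule.orthogonal_orthogonal, mem_null, map_sub, LinearEquiv.apply_symm_apply,
      mulVec_sub]
    rw [← mulVec_mulVec (M := Sᵀ) (N := S), SST_id hS, sub_self]

lemma mem_orthNull_iff (hS : S * Sᵀ = 1) (z : EuclideanSpace ℝ (Fin D)) :
    z ∈ (nullSpace S)ᗮ ↔ (Sᵀ * S).mulVec (ee D z) = ee D z := by
  constructor
  · intro h
    have h1 := pr_eq_self h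
    rw [pr_orthNull hS] at h1
    exact (LinearEquiv.symm_apply_eq (ee D)).mp h1
  · intro h
    have : z = (ee D).symm ((Sᵀ * S).mulVec (ee D z)) := by
      rw [h]; simp
    rw [this, ← mulVec_mulVec]
    exact range_mem_orthNull (S.mulVec (ee D z))

lemma SST_id' (hS : S * Sᵀ = 1) (y : Fin J → ℝ) : S *ᵥ Sᵀ *ᵥ y = y := by
  rw [mulVec_mulVec, hS, one_mulVec]

lemma eig_matrix_iff (hS : S * Sᵀ = 1) (hT : T * Tᵀ = 1) {a : ℝ} :
    a ∈ eigsOn (nullSpace S)ᗮ (nullSpace T)ᗮ ↔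
      ∃ zl : Fin D → ℝ, zl ≠ 0 ∧ (Sᵀ * S).mulVec zl = zl ∧
        (Sᵀ * S).mulVec ((Tᵀ * T).mulVec zl) = a • zl := by
  constructor
  · rintro ⟨z, hzW, hzne, heq⟩
    refine ⟨ee D z, by simpa using hzne, (mem_orthNull_iff hS z).mp hzW, ?_⟩
    rw [pr_orthNull hT, pr_orthNull hS, LinearEquiv.apply_symm_apply] at heq
    have := (LinearEquiv.symm_apply_eq (ee D)).mp heq
    rw [_root_.map_smul] at this
    exact this
  · rintro ⟨zl, hzlne, hzmem, heq⟩
    refine ⟨(ee D).symm zl, ?_, by simpa using hzlne, ?_⟩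
    · rw [mem_orthNull_iff hS, LinearEquiv.apply_symm_apply, hzmem]
    · rw [pr_orthNull hT, pr_orthNull hS, LinearEquiv.apply_symm_apply,
        LinearEquiv.apply_symm_apply, LinearEquiv.symm_apply_eq, _root_.map_smul,
        LinearEquiv.apply_symm_apply, heq]

lemma bridge (hS : S * Sᵀ = 1) (hT : T * Tᵀ = 1) {a : ℝ} :
    a ∈ eigsOn (nullSpace S)ᗮ (nullSpace T)ᗮ ↔
      ∃ x : Fin J → ℝ, x ≠ 0 ∧ ((S * Tᵀ) * (S * Tᵀ)ᵀ).mulVec x = a • x := by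
  have htr : (S * Tᵀ) * (S * Tᵀ)ᵀ = S * (Tᵀ * (T * Sᵀ)) := by
    rw [transpose_mul, transpose_transpose, Matrix.mul_assoc]
  rw [eig_matrix_iff hS hT, htr]
  constructor
  · rintro ⟨zl, hzlne, hzmem, heq⟩
    have hz' : Sᵀ *ᵥ S *ᵥ zl = zl := by rw [mulVec_mulVec, hzmem]
    have heq' : Sᵀ *ᵥ S *ᵥ Tᵀ *ᵥ T *ᵥ zl = a • zl := by
      simpa only [← mulVec_mulVec] using heq
    refine ⟨S.mulVec zl, ?_, ?_⟩
    · intro hx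
      apply hzlne
      have : Sᵀ *ᵥ S *ᵥ zl = 0 := by rw [hx, mulVec_zero]
      rwa [hz'] at this
    · simp only [← mulVec_mulVec]
      rw [hz', ← mulVec_smul, ← heq', SST_id' hS]
  · rintro ⟨x, hxne, heq⟩
    refine ⟨Sᵀ *ᵥ x, ?_, ?_, ?_⟩
    · intro hz
      apply hxne
      have := SST_id' hS x
      rw [hz, mulVec_zero] at this
      exact this.symm
    · rw [← mulVec_mulVec, SST_id' hS]
    · rw [← mulVec_smul, ← heq]
      simp only [← mulVec_mulVec]

end Fried

open Fried

theorem stmt4 {J K D : ℕ}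
    (S : Matrix (Fin J) (Fin D) ℝ) (T : Matrix (Fin K) (Fin D) ℝ)
    (hS : S * Sᵀ = 1) (hT : T * Tᵀ = 1) :
    ((∀ σ, IsSingularValue (S * Tᵀ) σ → σ = 1) →
      friedrichs (nullSpace S) (nullSpace T) = 0) ∧
    ((∃ σ, IsSingularValue (S * Tᵀ) σ ∧ σ ≠ 1) →
      IsGreatest {σ | IsSingularValue (S * Tᵀ) σ ∧ σ < 1}
        (friedrichs (nullSpace S) (nullSpace T))) := by
  set U := nullSpace S with hUdef
  set V := nullSpace T with hVdef
  have hsing : ∀ σ : ℝ, IsSingularValue (S * Tᵀ) σ ↔ 0 ≤ σ ∧ σ ^ 2 ∈ eigsOn Uᗮ Vᗮ := by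
    intro σ
    unfold IsSingularValue
    rw [bridge hS hT]
  constructor
  · intro hall
    by_cases hUb : Usub U V = ⊥
    · exact friedrichs_bot U V hUb
    · rw [friedrichs_eq_sqrt U V hUb]
      have hlam0 : 0 ≤ lam U V := lam_nonneg U V hUb
      obtain ⟨u₀, hu₀⟩ := (hasEigenvalue_lam U V hUb).exists_hasEigenvector
      have heig : B U V u₀ = lam U V • u₀ := Module.End.mem_eigenspace_iff.mp hu₀.1
      have hlt1 : lam U V < 1 := eigen_lt_one U V hu₀.2 heig
      rcases eq_or_lt_of_le hlam0 with h0 | hpos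
      · rw [← h0, Real.sqrt_zero]
      · exfalso
        have h1 : lam U V ∈ eigsOn U V := B_to_eigsOn hu₀.2 heig
        have h2 : lam U V ∈ eigsOn Uᗮ Vᗮ :=
          eigsOn_orthogonal h1 (ne_of_gt hpos) (ne_of_lt hlt1)
        have h3 : IsSingularValue (S * Tᵀ) (Real.sqrt (lam U V)) :=
          (hsing _).mpr ⟨Real.sqrt_nonneg _, by rw [Real.sq_sqrt hlam0]; exact h2⟩
        have h4 := hall _ h3
        have h5 : lam U V = 1 := by
          have := Real.sq_sqrt hlam0
          rw [h4] at this
          simpa using this.symm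
        linarith
  · rintro ⟨σ₀, hσ₀, hσ₀ne⟩
    have hσ₀' := (hsing σ₀).mp hσ₀
    have hIcc := eigsOn_mem_Icc hσ₀'.2
    have hσ₀le : σ₀ ≤ 1 := by nlinarith [hσ₀'.1, hIcc.2]
    have hσ₀lt : σ₀ < 1 := lt_of_le_of_ne hσ₀le hσ₀ne
    have hub : ∀ σ : ℝ, IsSingularValue (S * Tᵀ) σ → σ < 1 → σ ≤ friedrichs U V := by
      intro σ hs hlt
      have hs' := (hsing σ).mp hs
      rcases eq_or_lt_of_le hs'.1 with h0 | hp
      · rw [← h0]; exact friedrichs_nonneg U V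
      · have hne0 : σ ^ 2 ≠ 0 := by positivity
        have hne1 : σ ^ 2 ≠ 1 := by nlinarith
        have h1 : σ ^ 2 ∈ eigsOn U V := (eigsOn_orthogonal_iff hne0 hne1).mp hs'.2
        obtain ⟨u, hune, heig⟩ := eigsOn_to_B h1 hne1
        have hUb : Usub U V ≠ ⊥ := by
          intro hb
          apply hune
          have h2 : (u : EuclideanSpace ℝ (Fin D)) ∈ (⊥ : Submodule ℝ _) := hb ▸ u.2
          rw [Submodule.mem_bot] at h2
          exact Subtype.ext h2
        have hq : ⟪B U V u, u⟫ = σ ^ 2 * ‖u‖ ^ 2 := by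
          rw [heig, real_inner_smul_left, real_inner_self_eq_norm_sq]
        have hr := rayleigh_le_lam U V hune
        rw [hq] at hr
        have hunorm : (0:ℝ) < ‖u‖ := by simpa [norm_pos_iff] using hune
        have hr2 : σ ^ 2 ≤ lam U V := by
          have hd : σ ^ 2 * ‖u‖ ^ 2 / ‖u‖ ^ 2 = σ ^ 2 := by
            rw [mul_div_assoc, div_self (by positivity), mul_one]
          rwa [hd] at hr
        rw [friedrichs_eq_sqrt U V hUb]
        calc σ = Real.sqrt (σ ^ 2) := (Real.sqrt_sq hs'.1).symm
          _ ≤ Real.sqrt (lam U V) := Real.sqrt_le_sqrt hr2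
    refine ⟨?_, fun σ hσ => hub σ hσ.1 hσ.2⟩
    by_cases hUb : Usub U V = ⊥
    · have hfr : friedrichs U V = 0 := friedrichs_bot U V hUb
      have hσ0 : σ₀ = 0 := by
        have := hub σ₀ hσ₀ hσ₀lt
        rw [hfr] at this
        linarith [hσ₀'.1]
      rw [hfr]
      exact ⟨by rw [← hσ0]; exact hσ₀, by norm_num⟩
    · rw [friedrichs_eq_sqrt U V hUb]
      have hlam0 : 0 ≤ lam U V := lam_nonneg U V hUb
      obtain ⟨u₀, hu₀⟩ := (hasEigenvalue_lam U V hUb).exists_hasEigenvector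
      have heig : B U V u₀ = lam U V • u₀ := Module.End.mem_eigenspace_iff.mp hu₀.1
      have hlt1 : lam U V < 1 := eigen_lt_one U V hu₀.2 heig
      have hsqlt : Real.sqrt (lam U V) < 1 := by
        have := Real.sqrt_lt_sqrt hlam0 hlt1
        rwa [Real.sqrt_one] at this
      refine ⟨?_, hsqlt⟩
      rcases eq_or_lt_of_le hlam0 with h0 | hpos
      · have hσ0 : σ₀ = 0 := by
          have := hub σ₀ hσ₀ hσ₀lt
          rw [friedrichs_eq_sqrt U V hUb, ← h0, Real.sqrt_zero] at this
          linarith [hσ₀'.1]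
        rw [← h0, Real.sqrt_zero, ← hσ0]
        exact hσ₀
      · have h1 : lam U V ∈ eigsOn U V := B_to_eigsOn hu₀.2 heig
        have h2 : lam U V ∈ eigsOn Uᗮ Vᗮ :=
          eigsOn_orthogonal h1 (ne_of_gt hpos) (ne_of_lt hlt1)
        exact (hsing _).mpr ⟨Real.sqrt_nonneg _, by rw [Real.sq_sqrt hlam0]; exact h2⟩
end
end

section
/- Let F be a submodular function on a ground set V with F(∅) = 0, and let B(F)_x be a nonempty face of its base polytope B(F). Then there exists a partition of V into disjoint nonempty sets A₁, …, A_M such that aff(B(F)_x) = ⋂_{m=1}^{M} {s ∈ ℝ^N : s(A₁ ∪ ⋯ ∪ A_m) = F(A₁ ∪ ⋯ ∪ A_m)}. -/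
open scoped RealInnerProductSpace
open Finset

noncomputable section

/-- A submodular set function on `Fin N` with `F ∅ = 0`. -/
def IsSubmodular {N : ℕ} (F : Finset (Fin N) → ℝ) : Prop :=
  F ∅ = 0 ∧ ∀ A B : Finset (Fin N), F (A ∪ B) + F (A ∩ B) ≤ F A + F B

/-- The base polytope of a set function. -/
def basePolytope {N : ℕ} (F : Finset (Fin N) → ℝ) :
    Set (EuclideanSpace ℝ (Fin N)) :=
  {s | (∀ A : Finset (Fin N), ∑ n ∈ A, s n ≤ F A) ∧ ∑ n, s n = F univ}

/-- The face of `P` in direction `x`: the set of maximizers of `⟪x, ·⟫` over `P`. -/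
def face {H : Type*} [NormedAddCommGroup H] [InnerProductSpace ℝ H]
    (P : Set H) (x : H) : Set H :=
  {p ∈ P | ∀ q ∈ P, ⟪x, q⟫ ≤ ⟪x, p⟫}

namespace Stmt5Aux

variable {N : ℕ} (F : Finset (Fin N) → ℝ) (x : EuclideanSpace ℝ (Fin N))

lemma inner_eq_sum (x y : EuclideanSpace ℝ (Fin N)) : ⟪x, y⟫ = ∑ n, x n * y n := by
  simp [PiLp.inner_apply, RCLike.inner_apply, conj_trivial]
  exact Finset.sum_congr rfl fun _ _ => mul_comm _ _

lemma bp_convex : Convex ℝ (basePolytope F) := by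
  intro s hs t ht a b ha hb hab
  constructor
  · intro A
    have hsum : ∑ n ∈ A, (a • s + b • t) n = a * ∑ n ∈ A, s n + b * ∑ n ∈ A, t n := by
      simp [Finset.sum_add_distrib, Finset.mul_sum]
    rw [hsum]
    have hF : a * F A + b * F A = F A := by rw [← add_mul, hab, one_mul]
    calc a * ∑ n ∈ A, s n + b * ∑ n ∈ A, t n ≤ a * F A + b * F A := by
          gcongr
          exacts [hs.1 A, ht.1 A]
      _ = F A := hF
  · have hsum : ∑ n, (a • s + b • t) n = a * ∑ n, s n + b * ∑ n, t n := by
      simp [Finset.sum_add_distrib, Finset.mul_sum]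
    rw [hsum, hs.2, ht.2, ← add_mul, hab, one_mul]

lemma face_convex : Convex ℝ (face (basePolytope F) x) := by
  intro s hs t ht a b ha hb hab
  refine ⟨bp_convex F hs.1 ht.1 ha hb hab, fun q hq => ?_⟩
  have h1 := hs.2 q hq
  have h2 := ht.2 q hq
  have : ⟪x, a • s + b • t⟫ = a * ⟪x, s⟫ + b * ⟪x, t⟫ := by
    rw [inner_add_right, real_inner_smul_right, real_inner_smul_right]
  rw [this]
  calc ⟪x, q⟫ = a * ⟪x, q⟫ + b * ⟪x, q⟫ := by rw [← add_mul, hab, one_mul]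
    _ ≤ a * ⟪x, s⟫ + b * ⟪x, t⟫ := by gcongr

/-- A set is tight on the face. -/
def Tight (A : Finset (Fin N)) : Prop :=
  ∀ s ∈ face (basePolytope F) x, ∑ n ∈ A, s n = F A

lemma tight_univ : Tight F x univ := fun s hs => hs.1.2

lemma tight_empty (hF : IsSubmodular F) : Tight F x ∅ := by
  intro s _; simp [hF.1]

/-- pointwise tightness is closed under union and intersection. -/
lemma point_tight_union_inter (hF : IsSubmodular F) {s : EuclideanSpace ℝ (Fin N)}
    (hs : s ∈ basePolytope F) {A B : Finset (Fin N)}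
    (hA : ∑ n ∈ A, s n = F A) (hB : ∑ n ∈ B, s n = F B) :
    ∑ n ∈ A ∪ B, s n = F (A ∪ B) ∧ ∑ n ∈ A ∩ B, s n = F (A ∩ B) := by
  have h1 := hs.1 (A ∪ B)
  have h2 := hs.1 (A ∩ B)
  have h3 := hF.2 A B
  have h4 : ∑ n ∈ A ∪ B, s n + ∑ n ∈ A ∩ B, s n = ∑ n ∈ A, s n + ∑ n ∈ B, s n :=
    Finset.sum_union_inter
  constructor <;> linarith

lemma tight_union (hF : IsSubmodular F) {A B : Finset (Fin N)}
    (hA : Tight F x A) (hB : Tight F x B) : Tight F x (A ∪ B) :=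
  fun s hs => (point_tight_union_inter F hF hs.1 (hA s hs) (hB s hs)).1

lemma tight_inter (hF : IsSubmodular F) {A B : Finset (Fin N)}
    (hA : Tight F x A) (hB : Tight F x B) : Tight F x (A ∩ B) :=
  fun s hs => (point_tight_union_inter F hF hs.1 (hA s hs) (hB s hs)).2

/-- generic: a predicate closed under binary inter containing univ holds of `inf`. -/
lemma inf_closed {p : Finset (Fin N) → Prop} (hU : p univ)
    (hI : ∀ A B, p A → p B → p (A ∩ B)) (S : Finset (Finset (Fin N)))
    (h : ∀ A ∈ S, p A) : p (S.inf id) := by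
  classical
  induction S using Finset.induction_on with
  | empty => simpa using hU
  | @insert a s ha ih =>
    rw [Finset.inf_insert]
    exact hI _ _ (h a (mem_insert_self a s)) (ih fun A hA => h A (mem_insert_of_mem hA))

lemma sup_closed {p : Finset (Fin N) → Prop} (hE : p ∅)
    (hI : ∀ A B, p A → p B → p (A ∪ B)) (S : Finset (Finset (Fin N)))
    (h : ∀ A ∈ S, p A) : p (S.sup id) := by
  classical
  induction S using Finset.induction_on with
  | empty => simpa using hE
  | @insert a s ha ih =>
    rw [Finset.sup_insert]
    exact hI _ _ (h a (mem_insert_self a s)) (ih fun A hA => h A (mem_insert_of_mem hA))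

lemma mem_inf_iff (S : Finset (Finset (Fin N))) (n : Fin N) :
    n ∈ S.inf id ↔ ∀ A ∈ S, n ∈ A := by
  classical
  induction S using Finset.induction_on with
  | empty => simp
  | @insert a s ha ih =>
    rw [Finset.inf_insert]
    simp [ih]


set_option maxHeartbeats 2000000 in
lemma superlevel_tight (hF : IsSubmodular F) (θ : ℝ) :
    Tight F x (univ.filter fun n => θ ≤ x n) := by
  classical
  intro s hs
  set U := univ.filter (fun n => θ ≤ x n) with hUdef
  by_contra hne'
  have hlt : ∑ n ∈ U, s n < F U := lt_of_le_of_ne (hs.1.1 U) hne'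
  set pt : Finset (Fin N) → Prop := fun A => ∑ n ∈ A, s n = F A with hpt
  set Ds : Fin N → Finset (Fin N) :=
    fun n => ((univ : Finset (Finset (Fin N))).filter (fun A => n ∈ A ∧ pt A)).inf id with hDs
  have hptD : ∀ n, pt (Ds n) := by
    intro n
    refine inf_closed (p := pt) hs.1.2
      (fun A B hA hB => (point_tight_union_inter F hF hs.1 hA hB).2) _
      (fun A hA => (mem_filter.mp hA).2.2)
  have hmemD : ∀ n, n ∈ Ds n := by
    intro n
    rw [hDs, mem_inf_iff]
    exact fun A hA => (mem_filter.mp hA).2.1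
  have hDmin : ∀ n A, n ∈ A → pt A → Ds n ⊆ A := by
    intro n A h1 h2
    have : Ds n ≤ id A :=
      Finset.inf_le (f := id) (s := (univ : Finset (Finset (Fin N))).filter (fun B => n ∈ B ∧ pt B))
        (mem_filter.mpr ⟨mem_univ _, h1, h2⟩)
    exact this
  have hex : ∃ i ∈ U, ¬ Ds i ⊆ U := by
    by_contra hc
    push_neg at hc
    have hUeq : U = U.sup Ds := by
      apply subset_antisymm
      · intro n hn
        rw [Finset.sup_eq_biUnion]
        exact mem_biUnion.mpr ⟨n, hn, hmemD n⟩
      · exact Finset.sup_le fun i hi => hc i hi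
    have himg : U.sup Ds = (U.image Ds).sup id := by
      rw [Finset.sup_image]
      rfl
    have hUt : pt U := by
      rw [hUeq, himg]
      refine sup_closed (p := pt) (by simp [hpt, hF.1])
        (fun A B hA hB => (point_tight_union_inter F hF hs.1 hA hB).1) _ ?_
      intro A hA
      obtain ⟨i, hi, rfl⟩ := Finset.mem_image.mp hA
      exact hptD i
    exact hlt.ne hUt
  obtain ⟨i, hiU, hnot⟩ := hex
  obtain ⟨j, hjD, hjU⟩ := Finset.not_subset.mp hnot
  have hji : j ≠ i := fun h => hjU (h ▸ hiU)
  set B0 : Finset (Finset (Fin N)) :=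
    (univ : Finset (Finset (Fin N))).filter (fun A => i ∈ A ∧ j ∉ A) with hB0
  have hB0ne : B0.Nonempty := ⟨{i}, by simp [hB0, hji]⟩
  set α := B0.inf' hB0ne (fun A => F A - ∑ n ∈ A, s n) with hα
  have hαle : ∀ A : Finset (Fin N), i ∈ A → j ∉ A → α ≤ F A - ∑ n ∈ A, s n := by
    intro A h1 h2
    exact Finset.inf'_le _ (mem_filter.mpr ⟨mem_univ _, h1, h2⟩)
  have hαpos : 0 < α := by
    rw [hα, Finset.lt_inf'_iff]
    intro A hA
    obtain ⟨hiA, hjA⟩ := (mem_filter.mp hA).2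
    have hne2 : ¬ pt A := fun h => hjA (hDmin i A hiA h hjD)
    have := lt_of_le_of_ne (hs.1.1 A) hne2
    linarith
  set s' : EuclideanSpace ℝ (Fin N) :=
    s + α • (EuclideanSpace.single i (1:ℝ) - EuclideanSpace.single j 1) with hs'
  have happ : ∀ n, s' n = s n + α * ((if n = i then (1:ℝ) else 0) - (if n = j then 1 else 0)) := by
    intro n
    simp [hs', EuclideanSpace.single_apply]
  have hsum' : ∀ A : Finset (Fin N), ∑ n ∈ A, s' n
      = ∑ n ∈ A, s n + α * ((if i ∈ A then (1:ℝ) else 0) - (if j ∈ A then 1 else 0)) := by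
    intro A
    rw [Finset.sum_congr rfl (fun n _ => happ n), Finset.sum_add_distrib]
    congr 1
    rw [← Finset.mul_sum]
    congr 1
    rw [Finset.sum_sub_distrib, Finset.sum_ite_eq' A i (fun _ => (1:ℝ)),
      Finset.sum_ite_eq' A j (fun _ => (1:ℝ))]
  have hs'bp : s' ∈ basePolytope F := by
    constructor
    · intro A
      rw [hsum' A]
      by_cases hiA : i ∈ A <;> by_cases hjA : j ∈ A <;> simp only [hiA, hjA, if_true, if_false]
      · simpa using hs.1.1 A
      · have := hαle A hiA hjA
        linarith
      · have := hs.1.1 A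
        linarith
      · simpa using hs.1.1 A
    · have hiu : i ∈ (univ : Finset (Fin N)) := mem_univ _
      have hju : j ∈ (univ : Finset (Fin N)) := mem_univ _
      rw [hsum' univ]
      simp [hs.1.2]
  have hinner : ⟪x, s'⟫ = ⟪x, s⟫ + α * (x i - x j) := by
    rw [hs']
    simp only [inner_add_right, real_inner_smul_right, inner_sub_right,
      EuclideanSpace.inner_single_right, conj_trivial]
    ring
  have hmax := hs.2 s' hs'bp
  rw [hinner] at hmax
  have hxi : θ ≤ x i := (mem_filter.mp hiU).2
  have hxj : ¬ θ ≤ x j := fun h => hjU (mem_filter.mpr ⟨mem_univ _, h⟩)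
  push_neg at hxj
  nlinarith [mul_pos hαpos (sub_pos.mpr (lt_of_lt_of_le hxj hxi))]


open scoped Classical in
/-- The minimal tight set containing `n`. -/
def DD (n : Fin N) : Finset (Fin N) :=
  ((univ : Finset (Finset (Fin N))).filter (fun A => n ∈ A ∧ Tight F x A)).inf id

lemma tight_DD (hF : IsSubmodular F) (n : Fin N) : Tight F x (DD F x n) := by
  classical
  exact inf_closed (p := Tight F x) (tight_univ F x)
    (fun A B hA hB => tight_inter F x hF hA hB) _
    (fun A hA => (mem_filter.mp hA).2.2)

lemma mem_DD (n : Fin N) : n ∈ DD F x n := by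
  classical
  rw [DD, mem_inf_iff]
  exact fun A hA => (mem_filter.mp hA).2.1

lemma DD_min {n : Fin N} {A : Finset (Fin N)} (h1 : n ∈ A) (h2 : Tight F x A) :
    DD F x n ⊆ A := by
  classical
  have : DD F x n ≤ id A :=
    Finset.inf_le (f := id) (mem_filter.mpr ⟨mem_univ _, h1, h2⟩)
  exact this

lemma DD_subset (hF : IsSubmodular F) {n n' : Fin N} (h : n' ∈ DD F x n) :
    DD F x n' ⊆ DD F x n :=
  DD_min F x h (tight_DD F x hF n)

lemma x_const_aux (hF : IsSubmodular F) {a b : Fin N} (h : DD F x a = DD F x b) :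
    ¬ x b < x a := by
  intro hlt
  classical
  have hU : Tight F x (univ.filter fun n => x a ≤ x n) := superlevel_tight F x hF (x a)
  have haU : a ∈ univ.filter fun n => x a ≤ x n := mem_filter.mpr ⟨mem_univ _, le_refl _⟩
  have hsub : DD F x a ⊆ univ.filter fun n => x a ≤ x n := DD_min F x haU hU
  have hbD : b ∈ DD F x a := h ▸ mem_DD F x b
  have := (mem_filter.mp (hsub hbD)).2
  linarith

lemma x_const (hF : IsSubmodular F) {a b : Fin N} (h : DD F x a = DD F x b) :
    x a = x b :=
  le_antisymm (not_lt.mp (x_const_aux F x hF h)) (not_lt.mp (x_const_aux F x hF h.symm))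


def hyperplane (B : Finset (Fin N)) (c : ℝ) : AffineSubspace ℝ (EuclideanSpace ℝ (Fin N)) where
  carrier := {s | ∑ n ∈ B, s n = c}
  smul_vsub_vadd_mem' := by
    intro t p1 p2 p3 h1 h2 h3
    show ∑ n ∈ B, (t • (p1 -ᵥ p2) +ᵥ p3 : EuclideanSpace ℝ (Fin N)) n = c
    have hn : ∀ n, (t • (p1 -ᵥ p2) +ᵥ p3 : EuclideanSpace ℝ (Fin N)) n
        = t * (p1 n - p2 n) + p3 n := fun n => rfl
    rw [Finset.sum_congr rfl fun n _ => hn n, Finset.sum_add_distrib, ← Finset.mul_sum,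
      Finset.sum_sub_distrib]
    rw [Set.mem_setOf_eq] at h1 h2 h3
    rw [h1, h2, h3]
    ring

lemma down_tight (hF : IsSubmodular F) (S : Finset (Fin N))
    (hS : ∀ n ∈ S, DD F x n ⊆ S) : Tight F x S := by
  classical
  have hSeq : S = (S.image (DD F x)).sup id := by
    apply subset_antisymm
    · intro n hn
      rw [Finset.sup_eq_biUnion]
      exact mem_biUnion.mpr ⟨DD F x n, mem_image_of_mem _ hn, mem_DD F x n⟩
    · intro a ha
      rw [Finset.sup_eq_biUnion] at ha
      obtain ⟨B, hB, haB⟩ := mem_biUnion.mp ha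
      obtain ⟨n, hn, rfl⟩ := mem_image.mp hB
      exact hS n hn haB
  rw [hSeq]
  exact sup_closed (p := Tight F x) (tight_empty F x hF)
    (fun A B hA hB => tight_union F x hF hA hB) _
    (fun B hB => by obtain ⟨n, _, rfl⟩ := mem_image.mp hB; exact tight_DD F x hF n)

lemma exists_strict_point (hF : IsSubmodular F)
    (hne : (face (basePolytope F) x).Nonempty) :
    ∃ p ∈ face (basePolytope F) x,
      ∀ B : Finset (Fin N), ¬ Tight F x B → ∑ n ∈ B, p n < F B := by
  classical
  obtain ⟨s₀, hs₀⟩ := hne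
  have hw : ∀ B : Finset (Fin N), ∃ w ∈ face (basePolytope F) x,
      (¬ Tight F x B → ∑ n ∈ B, w n < F B) := by
    intro B
    by_cases h : Tight F x B
    · exact ⟨s₀, hs₀, fun hc => absurd h hc⟩
    · have h' := h
      rw [Tight] at h'
      push_neg at h'
      obtain ⟨w, hw1, hw2⟩ := h'
      exact ⟨w, hw1, fun _ => lt_of_le_of_ne (hw1.1.1 B) hw2⟩
  choose g hg1 hg2 using hw
  set K : ℕ := (univ : Finset (Finset (Fin N))).card with hK
  have hKpos : 0 < (K:ℝ) := by
    have : 0 < K := Finset.card_pos.mpr (univ_nonempty)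
    exact_mod_cast this
  set p : EuclideanSpace ℝ (Fin N) :=
    ∑ B ∈ (univ : Finset (Finset (Fin N))), ((K:ℝ)⁻¹) • g B with hp
  have hpface : p ∈ face (basePolytope F) x := by
    refine Convex.sum_mem (face_convex F x) (fun B _ => by positivity) ?_ (fun B _ => hg1 B)
    rw [Finset.sum_const, nsmul_eq_mul, ← hK, mul_inv_cancel₀ (ne_of_gt hKpos)]
  refine ⟨p, hpface, ?_⟩
  intro B hB
  have happ : ∀ n, p n = ∑ C ∈ (univ : Finset (Finset (Fin N))), (K:ℝ)⁻¹ * g C n := by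
    intro n
    rw [hp, WithLp.ofLp_sum]
    exact Finset.sum_apply n univ _
  have hsum : ∑ n ∈ B, p n
      = (K:ℝ)⁻¹ * ∑ C ∈ (univ : Finset (Finset (Fin N))), (∑ n ∈ B, g C n) := by
    rw [Finset.sum_congr rfl fun n _ => happ n, Finset.sum_comm, Finset.mul_sum]
    exact Finset.sum_congr rfl fun C _ => by rw [Finset.mul_sum]
  have hlt : ∑ C ∈ (univ : Finset (Finset (Fin N))), (∑ n ∈ B, g C n)
      < ∑ C ∈ (univ : Finset (Finset (Fin N))), F B :=
    Finset.sum_lt_sum (fun C _ => (hg1 C).1.1 B) ⟨B, mem_univ B, hg2 B hB⟩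
  rw [hsum]
  have : ∑ C ∈ (univ : Finset (Finset (Fin N))), F B = (K:ℝ) * F B := by
    rw [Finset.sum_const, nsmul_eq_mul]
  rw [this] at hlt
  calc (K:ℝ)⁻¹ * ∑ C ∈ (univ : Finset (Finset (Fin N))), (∑ n ∈ B, g C n)
      < (K:ℝ)⁻¹ * ((K:ℝ) * F B) := by
        apply mul_lt_mul_of_pos_left hlt
        positivity
    _ = F B := by field_simp

end Stmt5Aux


theorem stmt5 {N : ℕ} (F : Finset (Fin N) → ℝ) (hF : IsSubmodular F)
    (x : EuclideanSpace ℝ (Fin N))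
    (hne : (face (basePolytope F) x).Nonempty) :
    ∃ (M : ℕ) (A : Fin M → Finset (Fin N)),
      (∀ m, (A m).Nonempty) ∧
      (∀ n : Fin N, ∃! m : Fin M, n ∈ A m) ∧
      (affineSpan ℝ (face (basePolytope F) x) : Set (EuclideanSpace ℝ (Fin N))) =
        ⋂ m : Fin M,
          {s : EuclideanSpace ℝ (Fin N) |
            ∑ n ∈ (univ.filter (fun m' : Fin M => m' ≤ m)).biUnion A, s n =
              F ((univ.filter (fun m' : Fin M => m' ≤ m)).biUnion A)} := by
  classical
  open Stmt5Aux in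
  obtain ⟨s₀, hs₀⟩ := hne
  set 𝒦 : Finset (Colex (Finset (Fin N))) :=
    Finset.image (fun n => toColex (Stmt5Aux.DD F x n)) univ with hK
  set M := 𝒦.card with hM
  set e : Fin M ≃o {y // y ∈ 𝒦} := 𝒦.orderIsoOfFin rfl with he
  have hmemK : ∀ n, toColex (Stmt5Aux.DD F x n) ∈ 𝒦 :=
    fun n => mem_image_of_mem _ (mem_univ n)
  set idx : Fin N → Fin M := fun n => e.symm ⟨_, hmemK n⟩ with hidx
  have hidx_iff : ∀ n m, idx n = m ↔
      toColex (Stmt5Aux.DD F x n) = (e m : Colex (Finset (Fin N))) := by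
    intro n m
    rw [hidx]
    rw [OrderIso.symm_apply_eq]
    constructor
    · intro h; exact congrArg Subtype.val h
    · intro h; exact Subtype.ext h
  have hidx_mono : ∀ {n n'}, Stmt5Aux.DD F x n' ⊆ Stmt5Aux.DD F x n → idx n' ≤ idx n := by
    intro n n' h
    have hle : (⟨_, hmemK n'⟩ : {y // y ∈ 𝒦}) ≤ ⟨_, hmemK n⟩ :=
      Finset.Colex.toColex_le_toColex_of_subset h
    exact e.symm.monotone hle
  have hidx_eq : ∀ {n n'}, idx n = idx n' → Stmt5Aux.DD F x n = Stmt5Aux.DD F x n' := by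
    intro n n' h
    have h1 := (hidx_iff n (idx n)).mp rfl
    have h2 := (hidx_iff n' (idx n')).mp rfl
    rw [← h] at h2
    exact toColex_inj.mp (h1.trans h2.symm)
  set A : Fin M → Finset (Fin N) := fun m => univ.filter (fun n => idx n = m) with hA
  have hAmem : ∀ n m, n ∈ A m ↔ idx n = m := by
    intro n m
    simp [hA]
  have hAne : ∀ m, (A m).Nonempty := by
    intro m
    obtain ⟨n, _, hn⟩ := Finset.mem_image.mp (e m).2
    exact ⟨n, (hAmem n m).mpr ((hidx_iff n m).mpr hn)⟩
  refine ⟨M, A, hAne, ?_, ?_⟩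
  · intro n
    exact ⟨idx n, (hAmem n _).mpr rfl, fun m hm => ((hAmem n m).mp hm).symm⟩
  set T : Fin M → Finset (Fin N) := fun m => univ.filter (fun n => idx n ≤ m) with hT
  have hTeq : ∀ m : Fin M,
      (univ.filter (fun m' : Fin M => m' ≤ m)).biUnion A = T m := by
    intro m
    ext n
    simp only [mem_biUnion, mem_filter, mem_univ, true_and, hA, hT]
    constructor
    · rintro ⟨m', hm', rfl⟩; exact hm'
    · intro h; exact ⟨idx n, h, rfl⟩
  have hTt : ∀ m, Stmt5Aux.Tight F x (T m) := by
    intro m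
    refine Stmt5Aux.down_tight F x hF _ ?_
    intro n hn n' hn'
    have h1 : idx n' ≤ idx n := hidx_mono (Stmt5Aux.DD_subset F x hF hn')
    have h2 : idx n ≤ m := (mem_filter.mp hn).2
    exact mem_filter.mpr ⟨mem_univ _, le_trans h1 h2⟩
  set Tlt : Fin M → Finset (Fin N) := fun m => univ.filter (fun n => idx n < m) with hTlt
  have hTltt : ∀ m, Stmt5Aux.Tight F x (Tlt m) := by
    intro m
    refine Stmt5Aux.down_tight F x hF _ ?_
    intro n hn n' hn'
    have h1 : idx n' ≤ idx n := hidx_mono (Stmt5Aux.DD_subset F x hF hn')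
    have h2 : idx n < m := (mem_filter.mp hn).2
    exact mem_filter.mpr ⟨mem_univ _, lt_of_le_of_lt h1 h2⟩
  have hmain : (affineSpan ℝ (face (basePolytope F) x) : Set (EuclideanSpace ℝ (Fin N))) =
      ⋂ m : Fin M, {s : EuclideanSpace ℝ (Fin N) | ∑ n ∈ T m, s n = F (T m)} := by
    apply Set.Subset.antisymm
    · refine Set.subset_iInter fun m => ?_
      have hle : affineSpan ℝ (face (basePolytope F) x) ≤
          Stmt5Aux.hyperplane (T m) (F (T m)) :=
        affineSpan_le.mpr (fun q hq => hTt m q hq)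
      exact fun s hs => hle hs
    · intro s hs
      have hsT : ∀ m, ∑ n ∈ T m, s n = F (T m) := fun m => Set.mem_iInter.mp hs m
      have hsTlt : ∀ m, ∑ n ∈ Tlt m, s n = F (Tlt m) := by
        intro m
        rcases Nat.eq_zero_or_pos m.val with h0 | hpos
        · have hempty : Tlt m = ∅ := by
            refine Finset.eq_empty_of_forall_notMem fun n hn => ?_
            have h2 := (mem_filter.mp hn).2
            rw [Fin.lt_def, h0] at h2
            exact absurd h2 (Nat.not_lt_zero _)
          rw [hempty]
          simp [hF.1]
        · have hmM : m.val - 1 < M := by omega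
          have : Tlt m = T (⟨m.val - 1, hmM⟩ : Fin M) := by
            ext n
            simp only [hTlt, hT, mem_filter, mem_univ, true_and, Fin.lt_def, Fin.le_def]
            omega
          rw [this]
          exact hsT _
      have hs₀T : ∀ m, ∑ n ∈ T m, s₀ n = F (T m) := fun m => hTt m s₀ hs₀
      have hs₀Tlt : ∀ m, ∑ n ∈ Tlt m, s₀ n = F (Tlt m) := fun m => hTltt m s₀ hs₀
      have hsubTlt : ∀ m, Tlt m ⊆ T m := fun m n hn =>
        mem_filter.mpr ⟨mem_univ _, le_of_lt (mem_filter.mp hn).2⟩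
      have hAeq : ∀ m, A m = T m \ Tlt m := by
        intro m
        ext n
        simp only [hA, hT, hTlt, mem_sdiff, mem_filter, mem_univ, true_and, not_lt]
        constructor
        · rintro rfl
          exact ⟨le_refl _, le_refl _⟩
        · rintro ⟨h1, h2⟩
          exact le_antisymm h1 h2
      have hblock : ∀ m, ∑ n ∈ A m, s n = ∑ n ∈ A m, s₀ n := by
        intro m
        rw [hAeq m, Finset.sum_sdiff_eq_sub (hsubTlt m), Finset.sum_sdiff_eq_sub (hsubTlt m),
          hsT m, hsTlt m, hs₀T m, hs₀Tlt m]
      have htightval : ∀ B : Finset (Fin N), Stmt5Aux.Tight F x B → ∑ n ∈ B, s n = F B := by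
        intro B hB
        have hfibsum : ∀ u : EuclideanSpace ℝ (Fin N), ∑ n ∈ B, u n
            = ∑ m : Fin M, ∑ n ∈ B.filter (fun n => idx n = m), u n :=
          fun u => (Finset.sum_fiberwise B idx (fun n => u n)).symm
        have hfib : ∀ m, ∑ n ∈ B.filter (fun n => idx n = m), s n
            = ∑ n ∈ B.filter (fun n => idx n = m), s₀ n := by
          intro m
          by_cases hsub : A m ⊆ B
          · have heq : B.filter (fun n => idx n = m) = A m := by
              ext n
              simp only [mem_filter, hA, mem_univ, true_and]
              exact ⟨fun h => h.2, fun h => ⟨hsub (mem_filter.mpr ⟨mem_univ _, h⟩), h⟩⟩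
            rw [heq]
            exact hblock m
          · have heq : B.filter (fun n => idx n = m) = ∅ := by
              obtain ⟨n₀, hn₀A, hn₀B⟩ := Finset.not_subset.mp hsub
              ext n
              simp only [mem_filter, notMem_empty, iff_false, not_and]
              intro hnB hm
              have h0 : idx n₀ = m := (hAmem n₀ m).mp hn₀A
              have hDD : Stmt5Aux.DD F x n = Stmt5Aux.DD F x n₀ := hidx_eq (by rw [hm, h0])
              exact hn₀B (Stmt5Aux.DD_min F x hnB hB (hDD ▸ Stmt5Aux.mem_DD F x n₀))
            rw [heq]
            simp
        calc ∑ n ∈ B, s n = ∑ m : Fin M, ∑ n ∈ B.filter (fun n => idx n = m), s n := hfibsum s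
          _ = ∑ m : Fin M, ∑ n ∈ B.filter (fun n => idx n = m), s₀ n :=
              Finset.sum_congr rfl (fun m _ => hfib m)
          _ = ∑ n ∈ B, s₀ n := (hfibsum s₀).symm
          _ = F B := hB s₀ hs₀
      have hinner : ⟪x, s⟫ = ⟪x, s₀⟫ := by
        rw [Stmt5Aux.inner_eq_sum, Stmt5Aux.inner_eq_sum]
        rw [← Finset.sum_fiberwise univ idx (fun n => x n * s n),
          ← Finset.sum_fiberwise univ idx (fun n => x n * s₀ n)]
        refine Finset.sum_congr rfl fun m _ => ?_
        obtain ⟨nm, hnm⟩ := hAne m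
        have hxc : ∀ n ∈ A m, x n = x nm := fun n hn =>
          Stmt5Aux.x_const F x hF (hidx_eq (by rw [(hAmem n m).mp hn, (hAmem nm m).mp hnm]))
        have hAfilt : univ.filter (fun n => idx n = m) = A m := rfl
        rw [hAfilt]
        calc ∑ n ∈ A m, x n * s n = ∑ n ∈ A m, x nm * s n :=
              Finset.sum_congr rfl fun n hn => by rw [hxc n hn]
          _ = x nm * ∑ n ∈ A m, s n := (Finset.mul_sum _ _ _).symm
          _ = x nm * ∑ n ∈ A m, s₀ n := by rw [hblock m]
          _ = ∑ n ∈ A m, x nm * s₀ n := Finset.mul_sum _ _ _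
          _ = ∑ n ∈ A m, x n * s₀ n := Finset.sum_congr rfl fun n hn => by rw [hxc n hn]
      obtain ⟨p, hpface, hpstrict⟩ := Stmt5Aux.exists_strict_point F x hF ⟨s₀, hs₀⟩
      have hinnerp : ⟪x, s⟫ = ⟪x, p⟫ := by
        rw [hinner]
        exact le_antisymm (hpface.2 s₀ hs₀.1) (hs₀.2 p hpface.1)
      set NT : Finset (Finset (Fin N)) :=
        (univ : Finset (Finset (Fin N))).filter (fun B => ¬ Stmt5Aux.Tight F x B) with hNT
      set d : Finset (Fin N) → ℝ := fun B => ∑ n ∈ B, s n - ∑ n ∈ B, p n with hd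
      set δ : Finset (Fin N) → ℝ := fun B => (F B - ∑ n ∈ B, p n) / (|d B| + 1) with hδ
      set ε : ℝ := (insert (1:ℝ) (NT.image δ)).min' (insert_nonempty _ _) with hε
      have hεmem : ∀ y ∈ insert (1:ℝ) (NT.image δ), 0 < y := by
        intro y hy
        rcases mem_insert.mp hy with rfl | hy'
        · norm_num
        · obtain ⟨B, hB, rfl⟩ := mem_image.mp hy'
          have hBnt : ¬ Stmt5Aux.Tight F x B := (mem_filter.mp hB).2
          have h1 : 0 < F B - ∑ n ∈ B, p n := sub_pos.mpr (hpstrict B hBnt)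
          have h2 : 0 < |d B| + 1 := by
            have := abs_nonneg (d B)
            linarith
          exact div_pos h1 h2
      have hεpos : 0 < ε := (Finset.lt_min'_iff _ _).mpr hεmem
      have hεδ : ∀ B, ¬ Stmt5Aux.Tight F x B → ε ≤ δ B := fun B hB =>
        Finset.min'_le _ _ (mem_insert_of_mem (mem_image_of_mem δ (mem_filter.mpr ⟨mem_univ _, hB⟩)))
      set w : EuclideanSpace ℝ (Fin N) := p + ε • (s - p) with hw
      have hwapp : ∀ n, w n = p n + ε * (s n - p n) := fun n => rfl
      have hwsum : ∀ B : Finset (Fin N), ∑ n ∈ B, w n = ∑ n ∈ B, p n + ε * d B := by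
        intro B
        rw [Finset.sum_congr rfl fun n _ => hwapp n, Finset.sum_add_distrib, ← Finset.mul_sum,
          Finset.sum_sub_distrib]
      have hwb : w ∈ basePolytope F := by
        constructor
        · intro B
          by_cases hB : Stmt5Aux.Tight F x B
          · have h1 : ∑ n ∈ B, s n = F B := htightval B hB
            have h2 : ∑ n ∈ B, p n = F B := hB p hpface
            have hd0 : d B = 0 := by rw [hd]; simp [h1, h2]
            rw [hwsum B, h2, hd0]
            simp
          · have h1 : ∑ n ∈ B, p n < F B := hpstrict B hB
            have h2 : ε ≤ δ B := hεδ B hB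
            rw [hwsum B]
            have h3 : ε * d B ≤ δ B * |d B| := by
              calc ε * d B ≤ ε * |d B| := by nlinarith [le_abs_self (d B), hεpos]
                _ ≤ δ B * |d B| := mul_le_mul_of_nonneg_right h2 (abs_nonneg _)
            have h4 : δ B * |d B| ≤ F B - ∑ n ∈ B, p n := by
              have h5 : (0:ℝ) < |d B| + 1 := by
                have := abs_nonneg (d B)
                linarith
              rw [hδ, div_mul_eq_mul_div, div_le_iff₀ h5]
              nlinarith [abs_nonneg (d B), sub_pos.mpr h1]
            linarith
        · have h1 : ∑ n ∈ univ, s n = F univ := htightval univ (Stmt5Aux.tight_univ F x)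
          have h2 : ∑ n ∈ univ, p n = F univ := hpface.1.2
          have hd0 : d univ = 0 := by rw [hd]; simp only []; rw [h1, h2]; ring
          show ∑ n ∈ univ, w n = F univ
          rw [hwsum univ, h2, hd0]
          ring
      have hwface : w ∈ face (basePolytope F) x := by
        refine ⟨hwb, fun q hq => ?_⟩
        have hxw : ⟪x, w⟫ = ⟪x, p⟫ := by
          rw [hw, inner_add_right, real_inner_smul_right, inner_sub_right, ← hinnerp]
          ring
        rw [hxw]
        exact hpface.2 q hq
      have hseq : s = (ε⁻¹) • (w -ᵥ p) +ᵥ p := by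
        ext n
        show s n = ε⁻¹ * (w n - p n) + p n
        rw [hwapp n]
        field_simp
        ring
      rw [hseq]
      exact AffineSubspace.smul_vsub_vadd_mem _ ε⁻¹
        (subset_affineSpan ℝ _ hwface) (subset_affineSpan ℝ _ hpface)
        (subset_affineSpan ℝ _ hpface)
  rw [hmain]
  exact Set.iInter_congr fun m => by rw [hTeq m]
end
end
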